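/- arXiv:1410.1301 — 2 statements merged into one kernel-verified Lean document; each statement's English description precedes it below -/
import Mathlib

section
/- Let X be a complex Banach space and let T be a bounded C₀-semigroup on X with generator A. Suppose ω : ℝ₊ → (0, ∞) is a dominating function for T (i.e. ω is decreasing and ‖T(t) A R(1, A)‖ ≤ ω(t) for all t ≥ 0) such that ω(t) → 0 as t → ∞, and define ω*(s) = min{t ≥ 0 : ω(t) ≤ s} for s > 0. Then iσ(A) ∩ ℝ ⊂ {0}, sup{‖R(is, A)‖ : |s| ≥ 1} < ∞, and for any c ∈ (0, 1), ‖R(is, A)‖ = O(1/|s| + ω*(c|s|)) as s → 0. -/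
open Filter Topology MeasureTheory Set

namespace KTpaper

variable {X : Type*} [NormedAddCommGroup X] [NormedSpace ℂ X] [CompleteSpace X]

/-- `T` is a strongly continuous one-parameter semigroup (C₀-semigroup) on `X`;
the values of `T` on `(-∞,0)` are irrelevant. -/
structure IsC0Semigroup (T : ℝ → X →L[ℂ] X) : Prop where
  map_zero : T 0 = 1
  map_add : ∀ s t : ℝ, 0 ≤ s → 0 ≤ t → T (s + t) = (T s).comp (T t)
  strongContinuity : ∀ x : X, ContinuousOn (fun t : ℝ => T t x) (Set.Ici (0 : ℝ))

/-- The semigroup `T` is bounded: `sup_{t ≥ 0} ‖T(t)‖ < ∞`. -/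
def IsBoundedSG (T : ℝ → X →L[ℂ] X) : Prop :=
  ∃ M : ℝ, ∀ t : ℝ, 0 ≤ t → ‖T t‖ ≤ M

/-- The (in general unbounded) partially defined linear operator `A` is the generator
of `T`:  `x ∈ D(A)` with `A x = y` if and only if `(T(t)x - x)/t → y` as `t → 0+`. -/
def IsGenerator (T : ℝ → X →L[ℂ] X) (A : X →ₗ.[ℂ] X) : Prop :=
  ∀ x y : X, (∃ hx : x ∈ A.domain, A ⟨x, hx⟩ = y) ↔
    Filter.Tendsto (fun t : ℝ => (t : ℂ)⁻¹ • (T t x - x))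
      (nhdsWithin 0 (Set.Ioi 0)) (nhds y)

/-- `R` is the resolvent operator `R(lam, A) = (lam - A)⁻¹` of `A` at `lam`. -/
def IsResolventAt (A : X →ₗ.[ℂ] X) (lam : ℂ) (R : X →L[ℂ] X) : Prop :=
  (∀ x : X, ∃ hx : R x ∈ A.domain, lam • R x - A ⟨R x, hx⟩ = x) ∧
  (∀ x : A.domain, R (lam • (x : X) - A x) = x)

/-- The resolvent set `ρ(A)`. -/
def resolventSet (A : X →ₗ.[ℂ] X) : Set ℂ :=
  {lam | ∃ R : X →L[ℂ] X, IsResolventAt A lam R}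

/-- The spectrum `σ(A)`. -/
def spec (A : X →ₗ.[ℂ] X) : Set ℂ := (resolventSet A)ᶜ

/-- The set `iσ(A) ∩ ℝ`, viewed as a set of real numbers:  `s = i·lam` for some
`lam ∈ σ(A)` if and only if `lam = -i·s ∈ σ(A)`. -/
def bSpec (A : X →ₗ.[ℂ] X) : Set ℝ :=
  {s : ℝ | (-Complex.I * (s : ℂ)) ∈ spec A}

/-- The Fourier transform `(F a)(s) = ∫ e^{-i s t} a(t) dt` of `a ∈ L¹(ℝ)`. -/
noncomputable def FT (a : ℝ → ℂ) (s : ℝ) : ℂ :=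
  ∫ t : ℝ, Complex.exp (-(Complex.I * (s : ℂ) * (t : ℂ))) * a t

/-- `Λ` is of spectral synthesis: every `a ∈ L¹(ℝ)` whose Fourier transform vanishes
on `Λ` can be approximated in `L¹`-norm by functions whose Fourier transforms vanish
on an open neighbourhood of `Λ`. -/
def HasSpectralSynthesis (Λ : Set ℝ) : Prop :=
  ∀ a : ℝ → ℂ, MeasureTheory.Integrable a → (∀ s ∈ Λ, FT a s = 0) →
    ∀ ε : ℝ, 0 < ε → ∃ b : ℝ → ℂ, MeasureTheory.Integrable b ∧
      (∃ U : Set ℝ, IsOpen U ∧ Λ ⊆ U ∧ ∀ s ∈ U, FT b s = 0) ∧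
      (∫ t : ℝ, ‖a t - b t‖) < ε

/-- The exponential growth bound `ω₀(S)` of a function `S : (0,∞) → B(X)`,
as an extended real number. -/
noncomputable def growthBound (S : ℝ → X →L[ℂ] X) : EReal :=
  sInf {w : EReal | ∃ ω : ℝ, (ω : EReal) = w ∧
    ∃ M : ℝ, 1 ≤ M ∧ ∀ t : ℝ, 0 < t → ‖S t‖ ≤ M * Real.exp (ω * t)}

/-- The sector `Σ_θ = {λ ≠ 0 : |arg λ| < θ}`. -/
def sector (θ : ℝ) : Set ℂ := {z : ℂ | z ≠ 0 ∧ |Complex.arg z| < θ}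

/-- `S` is exponentially bounded on `Ω`. -/
def ExpBoundedOn (S : ℂ → X →L[ℂ] X) (Ω : Set ℂ) : Prop :=
  ∃ C : ℝ, 0 ≤ C ∧ ∃ ω : ℝ, ∀ z ∈ Ω, ‖S z‖ ≤ C * Real.exp (ω * ‖z‖)

/-- The non-analytic growth bound
`ζ(T) = inf {ω₀(T - S) : S ∈ H(Σ_θ; B(X)) for some θ > 0}`. -/
noncomputable def zeta (T : ℝ → X →L[ℂ] X) : EReal :=
  sInf {w : EReal | ∃ (θ : ℝ) (S : ℂ → X →L[ℂ] X), 0 < θ ∧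
    DifferentiableOn ℂ S (sector θ) ∧ ExpBoundedOn S (sector θ) ∧
    growthBound (fun t : ℝ => T t - S (t : ℂ)) = w}

/-- `T` is asymptotically analytic if `ζ(T) < 0`. -/
def AsymptoticallyAnalytic (T : ℝ → X →L[ℂ] X) : Prop := zeta T < (0 : EReal)

/-- The critical growth bound `δ(T)`: the infimum of `ω₀(T - S)` over all
exponentially bounded `S : (0,∞) → B(X)` that are norm-continuous. -/
noncomputable def delta' (T : ℝ → X →L[ℂ] X) : EReal :=
  sInf {w : EReal | ∃ S : ℝ → X →L[ℂ] X, ContinuousOn S (Set.Ioi 0) ∧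
    (∃ C : ℝ, 0 ≤ C ∧ ∃ ω : ℝ, ∀ t : ℝ, 0 < t → ‖S t‖ ≤ C * Real.exp (ω * t)) ∧
    growthBound (fun t : ℝ => T t - S t) = w}

/-- `s₀^∞(A)`: the infimum of all `α` such that the resolvent of `A` exists and is
uniformly bounded on `Q_{α,β} = {λ : Re λ ≥ α, |Im λ| ≥ β}` for some `β ≥ 0`. -/
noncomputable def s0inf (A : X →ₗ.[ℂ] X) : EReal :=
  sInf {w : EReal | ∃ α : ℝ, (α : EReal) = w ∧ ∃ β : ℝ, 0 ≤ β ∧ ∃ C : ℝ,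
    ∀ lam : ℂ, α ≤ lam.re → β ≤ |lam.im| →
      ∃ R : X →L[ℂ] X, IsResolventAt A lam R ∧ ‖R‖ ≤ C}

/-- FTC with right derivatives. -/
lemma ftc_right {f φ : ℝ → X} {b : ℝ} (hb : 0 ≤ b)
    (hf : ContinuousOn f (Set.Icc 0 b)) (hφ : Continuous φ)
    (hd : ∀ r ∈ Set.Ico (0:ℝ) b, HasDerivWithinAt f (φ r) (Set.Ici r) r) :
    f b = f 0 + ∫ r in (0:ℝ)..b, φ r := by
  set F : ℝ → X := fun r => ∫ s in (0:ℝ)..r, φ s with hF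
  have hFd : ∀ r : ℝ, HasDerivAt F (φ r) r := by
    intro r
    exact intervalIntegral.integral_hasDerivAt_right
      (hφ.intervalIntegrable _ _)
      hφ.aestronglyMeasurable.stronglyMeasurableAtFilter
      hφ.continuousAt
  have hFc : Continuous F := by
    exact continuous_iff_continuousAt.2 fun r => (hFd r).continuousAt
  set g : ℝ → X := fun r => f r - F r with hg
  have hgc : ContinuousOn g (Set.Icc 0 b) := hf.sub hFc.continuousOn
  have hgd : ∀ r ∈ Set.Ico (0:ℝ) b, HasDerivWithinAt g 0 (Set.Ici r) r := by
    intro r hr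
    have := (hd r hr).sub (hFd r).hasDerivWithinAt
    rwa [sub_self] at this
  have key := norm_image_sub_le_of_norm_deriv_right_le_segment hgc hgd
    (C := 0) (fun r _ => by simp) b (Set.right_mem_Icc.2 hb)
  have hgb : g b = g 0 := by
    have h1 : ‖g b - g 0‖ ≤ 0 := by simpa using key
    have := norm_le_zero_iff.1 h1
    exact sub_eq_zero.1 this
  have hF0 : F 0 = 0 := by simp [hF]
  have h2 : f b - F b = f 0 := by simpa [hg, hF0] using hgb
  have h3 : f b = f 0 + F b := by
    rw [← h2]; abel
  simpa [hF] using h3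


section SG
variable {T : ℝ → X →L[ℂ] X} {A : X →ₗ.[ℂ] X}

omit [CompleteSpace X] in
lemma sg_comm (hT : IsC0Semigroup T) (hA : IsGenerator T A) {v y : X}
    (h : ∃ hv : v ∈ A.domain, A ⟨v, hv⟩ = y) {r : ℝ} (hr : 0 ≤ r) :
    ∃ hv : T r v ∈ A.domain, A ⟨T r v, hv⟩ = T r y := by
  rw [hA]
  have hv := (hA v y).mp h
  have heq : ∀ t ∈ Set.Ioi (0:ℝ),
      ((fun z => T r z) ∘ (fun t : ℝ => (t : ℂ)⁻¹ • (T t v - v))) t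
        = (t : ℂ)⁻¹ • (T t (T r v) - T r v) := by
    intro t ht
    have hcomm : T t (T r v) = T r (T t v) := by
      have h1 := hT.map_add t r (le_of_lt ht) hr
      have h2 := hT.map_add r t hr (le_of_lt ht)
      calc T t (T r v) = T (t + r) v := by rw [h1]; rfl
        _ = T (r + t) v := by rw [add_comm]
        _ = T r (T t v) := by rw [h2]; rfl
    rw [hcomm]
    simp [Function.comp_apply]
  exact Filter.Tendsto.congr'
    (eventually_nhdsWithin_of_forall heq)
    (((T r).continuous.tendsto y).comp hv)

omit [CompleteSpace X] in
lemma sg_deriv (hT : IsC0Semigroup T) (hA : IsGenerator T A) {v y : X}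
    (h : ∃ hv : v ∈ A.domain, A ⟨v, hv⟩ = y) {r : ℝ} (hr : 0 ≤ r) :
    HasDerivWithinAt (fun s : ℝ => T s v) (T r y) (Set.Ici r) r := by
  rw [hasDerivWithinAt_iff_tendsto_slope]
  have hIci : Set.Ici r \ {r} = Set.Ioi r := Set.Ici_sdiff_left
  rw [hIci]
  have hv := (hA v y).mp h
  have hshift : Filter.Tendsto (fun s : ℝ => s - r) (nhdsWithin r (Set.Ioi r))
      (nhdsWithin 0 (Set.Ioi 0)) := by
    rw [tendsto_nhdsWithin_iff]
    constructor
    · apply Filter.Tendsto.mono_left _ nhdsWithin_le_nhds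
      simpa using (continuous_sub_right r).tendsto r
    · filter_upwards [self_mem_nhdsWithin] with s hs
      exact Set.mem_Ioi.2 (sub_pos.2 hs)
  have key : Filter.Tendsto
      ((fun z => T r z) ∘ (fun t : ℝ => (t : ℂ)⁻¹ • (T t v - v)) ∘ (fun s : ℝ => s - r))
      (nhdsWithin r (Set.Ioi r)) (nhds (T r y)) :=
    ((T r).continuous.tendsto y).comp (hv.comp hshift)
  refine Filter.Tendsto.congr' (eventually_nhdsWithin_of_forall ?_) key
  intro s hs
  have hs' : 0 < s - r := sub_pos.2 hs
  have hcomm : T s v = T r (T (s - r) v) := by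
    have h2 := hT.map_add r (s - r) hr hs'.le
    rw [show r + (s - r) = s from by ring] at h2
    rw [h2]; rfl
  rw [slope_def_module, hcomm]
  simp only [Function.comp_apply]
  have h1 : ((s - r : ℝ) : ℂ)⁻¹ • ((T (s-r)) v - v) = (s - r)⁻¹ • ((T (s-r)) v - v) := by
    rw [← Complex.ofReal_inv, Complex.coe_smul]
  rw [h1, (T r).map_smul_of_tower, map_sub]
end SG


section Res
variable {T : ℝ → X →L[ℂ] X} {A : X →ₗ.[ℂ] X} {lam mu : ℂ} {R : X →L[ℂ] X}

omit [CompleteSpace X] in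
lemma res_mem (hR : IsResolventAt A lam R) (x : X) :
    ∃ hx : R x ∈ A.domain, A ⟨R x, hx⟩ = lam • R x - x := by
  obtain ⟨hx, h⟩ := hR.1 x
  have h2 := sub_eq_iff_eq_add.mp h
  exact ⟨hx, by rw [h2]; abel⟩

omit [CompleteSpace X] in
lemma res_A_apply (hR : IsResolventAt A lam R) (u : A.domain) :
    R (A u) = lam • R u.1 - u.1 := by
  have h := hR.2 u
  rw [map_sub, R.map_smul] at h
  have h2 := sub_eq_iff_eq_add.mp h
  rw [h2]; abel

omit [CompleteSpace X] in
lemma res_comm_sg (hT : IsC0Semigroup T) (hA : IsGenerator T A)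
    (hR : IsResolventAt A lam R) {r : ℝ} (hr : 0 ≤ r) (x : X) :
    T r (R x) = R (T r x) := by
  obtain ⟨hx, hAx⟩ := res_mem hR x
  obtain ⟨hdom, hval⟩ := sg_comm hT hA ⟨hx, hAx⟩ hr
  have h2 := hR.2 ⟨T r (R x), hdom⟩
  have h3 : lam • (T r (R x)) - A ⟨T r (R x), hdom⟩ = T r x := by
    rw [hval, map_sub, (T r).map_smul]
    abel
  rw [← h3]
  exact (h2).symm

lemma neumann (hR : IsResolventAt A lam R)
    (h : ‖mu - lam‖ * ‖R‖ < 1) :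
    ∃ S : X →L[ℂ] X, IsResolventAt A mu S ∧
      ‖S‖ ≤ ‖R‖ / (1 - ‖mu - lam‖ * ‖R‖) := by
  set t : X →L[ℂ] X := (lam - mu) • R with hts
  have htn : ‖t‖ ≤ ‖mu - lam‖ * ‖R‖ := by
    rw [hts, norm_sub_rev mu lam]
    exact norm_smul_le (lam - mu) R
  have ht1 : ‖t‖ < 1 := lt_of_le_of_lt htn h
  set U : X →L[ℂ] X := ∑' n : ℕ, t ^ n with hU
  have hUl : U * (1 - t) = 1 := geom_series_mul_neg t ht1
  have hUr : (1 - t) * U = 1 := mul_neg_geom_series t ht1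
  have hsum : Summable fun n : ℕ => t ^ n := summable_geometric_of_norm_lt_one ht1
  have hcomm : ∀ n : ℕ, R * t ^ n = t ^ n * R := by
    intro n
    exact (((Commute.refl R).smul_right (lam - mu)).pow_right n).eq
  have hRU : R * U = U * R := by
    rw [hU, ← hsum.tsum_mul_left, ← hsum.tsum_mul_right]
    exact tsum_congr hcomm
  refine ⟨R * U, ⟨?_, ?_⟩, ?_⟩
  · intro x
    obtain ⟨hx, hAx⟩ := res_mem hR (U x)
    refine ⟨hx, ?_⟩
    have h1 : U x - (lam - mu) • (R (U x)) = x := by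
      have := congrArg (fun O : X →L[ℂ] X => O x) hUr
      simpa [sub_mul, hts] using this
    show mu • R (U x) - A ⟨R (U x), hx⟩ = x
    rw [hAx]
    calc mu • R (U x) - (lam • R (U x) - U x)
        = U x - (lam - mu) • (R (U x)) := by rw [sub_smul]; abel
      _ = x := h1
  · intro x
    have hRz : R (mu • (x : X) - A x) = (x : X) - (lam - mu) • R x := by
      have h2 := hR.2 x
      have : mu • (x : X) - A x = (lam • (x : X) - A x) - (lam - mu) • (x : X) := by
        rw [sub_smul]; abel
      rw [this, map_sub, h2, R.map_smul]
    have hUx : U ((x : X) - (lam - mu) • R x) = x := by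
      have : (x : X) - (lam - mu) • R x = (1 - t) x := by
        simp [hts, sub_smul]
      rw [this]
      have := congrArg (fun O : X →L[ℂ] X => O (x : X)) hUl
      simpa using this
    calc (R * U) (mu • (x : X) - A x) = (U * R) (mu • (x : X) - A x) := by rw [hRU]
      _ = U (R (mu • (x : X) - A x)) := rfl
      _ = U ((x : X) - (lam - mu) • R x) := by rw [hRz]
      _ = x := hUx
  · have hUn : ‖U‖ ≤ (1 - ‖t‖)⁻¹ := by
      have h1 := tsum_geometric_le_of_norm_lt_one t ht1
      have h2 : ‖(1 : X →L[ℂ] X)‖ ≤ 1 := by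
        rw [ContinuousLinearMap.one_def]; exact ContinuousLinearMap.norm_id_le
      rw [← hU] at h1
      linarith
    have hpos : 0 < 1 - ‖mu - lam‖ * ‖R‖ := by linarith
    have hpos' : 0 < 1 - ‖t‖ := by linarith
    calc ‖R * U‖ ≤ ‖R‖ * ‖U‖ := norm_mul_le _ _
      _ ≤ ‖R‖ * (1 - ‖t‖)⁻¹ := by
          exact mul_le_mul_of_nonneg_left hUn (norm_nonneg R)
      _ ≤ ‖R‖ * (1 - ‖mu - lam‖ * ‖R‖)⁻¹ := by
          apply mul_le_mul_of_nonneg_left _ (norm_nonneg R)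
          exact inv_anti₀ hpos (by linarith)
      _ = ‖R‖ / (1 - ‖mu - lam‖ * ‖R‖) := by rw [div_eq_mul_inv]

end Res


section Ident
variable {T : ℝ → X →L[ℂ] X} {A : X →ₗ.[ℂ] X} {lam : ℂ} {R : X →L[ℂ] X}

omit [CompleteSpace X] in
lemma exp_smul_deriv (hT : IsC0Semigroup T) (hA : IsGenerator T A) {v y : X}
    (h : ∃ hv : v ∈ A.domain, A ⟨v, hv⟩ = y) (lam : ℂ) {r : ℝ} (hr : 0 ≤ r) :
    HasDerivWithinAt (fun s : ℝ => Complex.exp (-(lam * s)) • T s v)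
      (Complex.exp (-(lam * r)) • (T r y - lam • T r v)) (Set.Ici r) r := by
  have hc : HasDerivAt (fun s : ℝ => Complex.exp (-(lam * s)))
      (Complex.exp (-(lam * r)) * (-lam)) r := by
    have h1 : HasDerivAt (fun z : ℂ => Complex.exp (-(lam * z)))
        (Complex.exp (-(lam * r)) * (-lam)) (r : ℂ) := by
      have h2 : HasDerivAt (fun z : ℂ => -(lam * z)) (-lam) (r : ℂ) := by
        exact (((hasDerivAt_id (r : ℂ)).const_mul lam).neg).congr_deriv (by simp)
      exact (Complex.hasDerivAt_exp (-(lam * (r : ℂ)))).comp (r : ℂ) h2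
    exact h1.comp_ofReal
  have hg : HasDerivWithinAt (fun s : ℝ => T s v) (T r y) (Set.Ici r) r :=
    sg_deriv hT hA h hr
  have := (hc.hasDerivWithinAt).smul hg
  convert this using 1
  · funext s; rfl
  rw [smul_sub]
  rw [smul_smul]
  module

omit [CompleteSpace X] in
lemma cont_ext (hT : IsC0Semigroup T) (u : X) (lam : ℂ) :
    Continuous (fun r : ℝ => Complex.exp (-(lam * (max r 0))) • T (max r 0) u) := by
  have hmax : Continuous (fun r : ℝ => max r 0) := continuous_id.max continuous_const
  have hTc : Continuous (fun r : ℝ => T (max r 0) u) :=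
    (hT.strongContinuity u).comp_continuous hmax (fun r => Set.mem_Ici.2 (le_max_right r 0))
  have hec : Continuous (fun r : ℝ => Complex.exp (-(lam * (max r 0)))) := by
    have : Continuous (fun r : ℝ => -(lam * ((max r 0 : ℝ) : ℂ))) :=
      (continuous_const.mul (Complex.continuous_ofReal.comp hmax)).neg
    exact Complex.continuous_exp.comp this
  exact hec.smul hTc

omit [CompleteSpace X] in
lemma cont_on_exp_smul (hT : IsC0Semigroup T) (u : X) (lam : ℂ) {b : ℝ} (hb : 0 ≤ b) :
    ContinuousOn (fun r : ℝ => Complex.exp (-(lam * r)) • T r u) (Set.Icc 0 b) := by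
  have := (cont_ext hT u lam).continuousOn (s := Set.Icc 0 b)
  apply ContinuousOn.congr this
  intro r hr
  simp only [max_eq_left hr.1]

omit [CompleteSpace X] in
lemma ext_integral_eq (hT : IsC0Semigroup T) (u : X) (lam : ℂ) {b : ℝ} (hb : 0 ≤ b) :
    (∫ r in (0:ℝ)..b, Complex.exp (-(lam * (max r 0))) • T (max r 0) u)
      = ∫ r in (0:ℝ)..b, Complex.exp (-(lam * r)) • T r u := by
  apply intervalIntegral.integral_congr
  intro r hr
  rw [Set.uIcc_of_le hb] at hr
  simp only [max_eq_left hr.1]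

/-- Key identity 1. -/
lemma res_integral_identity (hT : IsC0Semigroup T) (hA : IsGenerator T A)
    (hR : IsResolventAt A lam R) (u : X) {b : ℝ} (hb : 0 ≤ b) :
    R u = Complex.exp (-(lam * b)) • R (T b u)
      + ∫ r in (0:ℝ)..b, Complex.exp (-(lam * r)) • T r u := by
  obtain ⟨hv, hAv⟩ := res_mem hR u
  set f : ℝ → X := fun r => Complex.exp (-(lam * r)) • T r (R u) with hf
  set φ : ℝ → X := fun r => -(Complex.exp (-(lam * (max r 0))) • T (max r 0) u) with hφ
  have hder : ∀ r ∈ Set.Ico (0:ℝ) b, HasDerivWithinAt f (φ r) (Set.Ici r) r := by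
    intro r hr
    have := exp_smul_deriv hT hA ⟨hv, hAv⟩ lam hr.1
    have heq : Complex.exp (-(lam * r)) • (T r (lam • R u - u) - lam • T r (R u)) = φ r := by
      rw [hφ]
      simp only [max_eq_left hr.1]
      rw [map_sub, (T r).map_smul]
      rw [show lam • T r (R u) - T r u - lam • T r (R u) = -(T r u) from by abel]
      rw [smul_neg]
    rw [← heq]
    exact this
  have hftc := ftc_right (φ := φ) hb (cont_on_exp_smul hT (R u) lam hb) ((cont_ext hT u lam).neg) hder
  have hint : (∫ r in (0:ℝ)..b, φ r)
      = -∫ r in (0:ℝ)..b, Complex.exp (-(lam * r)) • T r u := by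
    rw [hφ]
    rw [intervalIntegral.integral_neg, ext_integral_eq hT u lam hb]
  rw [hint] at hftc
  have h0 : Complex.exp (-(lam * ((0:ℝ):ℂ))) • (T 0) (R u) = R u := by
    simp [hT.map_zero]
  rw [h0] at hftc
  have hcomm := res_comm_sg hT hA hR hb u
  rw [hcomm] at hftc
  rw [hftc]
  abel

/-- Key identity 2 (integration by parts form). -/
lemma sg_integral_split (hT : IsC0Semigroup T) (hA : IsGenerator T A) {v y : X}
    (h : ∃ hv : v ∈ A.domain, A ⟨v, hv⟩ = y) (lam : ℂ) {b : ℝ} (hb : 0 ≤ b) :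
    (∫ r in (0:ℝ)..b, Complex.exp (-(lam * r)) • T r y)
      = Complex.exp (-(lam * b)) • T b v - v
        + lam • ∫ r in (0:ℝ)..b, Complex.exp (-(lam * r)) • T r v := by
  set f : ℝ → X := fun r => Complex.exp (-(lam * r)) • T r v with hf
  set φ : ℝ → X := fun r => Complex.exp (-(lam * (max r 0))) • T (max r 0) y
      - lam • (Complex.exp (-(lam * (max r 0))) • T (max r 0) v) with hφ
  have hder : ∀ r ∈ Set.Ico (0:ℝ) b, HasDerivWithinAt f (φ r) (Set.Ici r) r := by
    intro r hr
    have := exp_smul_deriv hT hA h lam hr.1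
    have heq : Complex.exp (-(lam * r)) • (T r y - lam • T r v) = φ r := by
      rw [hφ]
      simp only [max_eq_left hr.1]
      rw [smul_sub, smul_comm]
    rw [← heq]
    exact this
  have hφc : Continuous φ := (cont_ext hT y lam).sub ((cont_ext hT v lam).const_smul lam)
  have hftc := ftc_right hb (cont_on_exp_smul hT v lam hb) hφc hder
  have hf0 : f 0 = v := by rw [hf]; simp [hT.map_zero]
  have hint : (∫ r in (0:ℝ)..b, φ r)
      = (∫ r in (0:ℝ)..b, Complex.exp (-(lam * r)) • T r y)
        - lam • ∫ r in (0:ℝ)..b, Complex.exp (-(lam * r)) • T r v := by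
    rw [hφ]
    beta_reduce
    rw [intervalIntegral.integral_sub
      (((cont_ext hT y lam)).intervalIntegrable _ _)
      ((by exact ((cont_ext hT v lam).const_smul lam).intervalIntegrable _ _ :
        IntervalIntegrable (fun r : ℝ => lam • (Complex.exp (-(lam * (max r 0))) • T (max r 0) v))
          volume 0 b))]
    rw [ext_integral_eq hT y lam hb]
    rw [intervalIntegral.integral_smul, ext_integral_eq hT v lam hb]
  rw [hint] at hftc
  have h0 : Complex.exp (-(lam * ((0:ℝ):ℂ))) • (T 0) v = v := by
    simp [hT.map_zero]
  rw [h0] at hftc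
  rw [hftc]
  abel
end Ident


section Master
variable {T : ℝ → X →L[ℂ] X} {A : X →ₗ.[ℂ] X} {R1 : X →L[ℂ] X} {ω : ℝ → ℝ}

omit [CompleteSpace X] in
lemma exp_abs_le {lam : ℂ} (hre : 0 ≤ lam.re) {r : ℝ} (hr : 0 ≤ r) :
    ‖Complex.exp (-(lam * r))‖ ≤ 1 := by
  rw [Complex.norm_exp]
  have : (-(lam * (r:ℂ))).re = -(lam.re * r) := by
    simp [Complex.mul_re]
  rw [this]
  rw [Real.exp_le_one_iff]
  nlinarith

omit [CompleteSpace X] in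
lemma Tu_bound (hω_dom : ∀ t : ℝ, 0 ≤ t → ‖(T t).comp (R1 - 1)‖ ≤ ω t)
    {r : ℝ} (hr : 0 ≤ r) (x : X) : ‖T r (R1 x - x)‖ ≤ ω r * ‖x‖ := by
  have h1 : T r (R1 x - x) = ((T r).comp (R1 - 1)) x := by
    simp [ContinuousLinearMap.comp_apply, ContinuousLinearMap.sub_apply]
  rw [h1]
  exact ((T r).comp (R1 - 1)).le_of_opNorm_le (hω_dom r hr) x

lemma master_bound (hT : IsC0Semigroup T) (hA : IsGenerator T A)
    (hR1 : IsResolventAt A 1 R1)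
    (hω_anti : AntitoneOn ω (Set.Ici (0:ℝ)))
    (hω_dom : ∀ t : ℝ, 0 ≤ t → ‖(T t).comp (R1 - 1)‖ ≤ ω t)
    {M : ℝ} (hM1 : 1 ≤ M) (hM : ∀ t : ℝ, 0 ≤ t → ‖T t‖ ≤ M)
    {lam : ℂ} (hre : 0 ≤ lam.re) (h0 : lam ≠ 0)
    {R : X →L[ℂ] X} (hR : IsResolventAt A lam R)
    {b : ℝ} (hb : 0 ≤ b) {J : ℝ} (hJ0 : 0 ≤ J)
    (hJ : b * ω 0 ≤ J ∨ M * ‖R1‖ * (2 + ‖lam‖ * b) ≤ J) :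
    ‖R‖ ≤ ‖R1‖ / ‖lam‖
      + ‖lam⁻¹ - 1‖ * (ω b * ‖R‖ + J) := by
  set q : ℝ := ‖lam⁻¹ - 1‖ with hq
  have hω0 : ∀ r : ℝ, 0 ≤ r → 0 ≤ ω r := fun r hr =>
    le_trans (norm_nonneg _) (hω_dom r hr)
  have hωb0 : ∀ r : ℝ, 0 ≤ r → ω r ≤ ω 0 := fun r hr =>
    hω_anti (Set.self_mem_Ici) hr hr
  have habs : 0 < ‖lam‖ := norm_pos_iff.mpr h0
  -- pointwise bound
  have hpt : ∀ x : X, ‖R x‖ ≤ (‖R1‖ / ‖lam‖ + q * (ω b * ‖R‖ + J)) * ‖x‖ := by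
    intro x
    obtain ⟨hxd, hAx⟩ := res_mem hR1 x
    have hAx' : A ⟨R1 x, hxd⟩ = R1 x - x := by rw [hAx, one_smul]
    -- resolvent applied to A (R1 x)
    have hRu : R (R1 x - x) = lam • R (R1 x) - R1 x := by
      have := res_A_apply hR ⟨R1 x, hxd⟩
      rw [hAx'] at this
      exact this
    -- algebraic identity
    have key : R x = lam⁻¹ • R1 x + (lam⁻¹ - 1) • R (R1 x - x) := by
      have hRu' : lam • R (R1 x) = R (R1 x - x) + R1 x := by
        rw [hRu]; abel
      have hsm : R (R1 x) = lam⁻¹ • (R (R1 x - x) + R1 x) := by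
        rw [← hRu', inv_smul_smul₀ h0]
      have hx2 : R x = R (R1 x) - R (R1 x - x) := by
        rw [← map_sub]
        congr 1
        abel
      rw [hx2, hsm]
      module
    -- integral identity
    have hid := res_integral_identity hT hA hR (R1 x - x) hb
    -- norm of the boundary term
    have hbt : ‖Complex.exp (-(lam * b)) • R (T b (R1 x - x))‖ ≤ ‖R‖ * (ω b * ‖x‖) := by
      rw [norm_smul]
      calc ‖Complex.exp (-(lam * b))‖ * ‖R (T b (R1 x - x))‖
          ≤ 1 * ‖R (T b (R1 x - x))‖ := by
            apply mul_le_mul_of_nonneg_right (exp_abs_le hre hb) (norm_nonneg _)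
        _ = ‖R (T b (R1 x - x))‖ := one_mul _
        _ ≤ ‖R‖ * ‖T b (R1 x - x)‖ := R.le_opNorm _
        _ ≤ ‖R‖ * (ω b * ‖x‖) :=
            mul_le_mul_of_nonneg_left (Tu_bound hω_dom hb x) (norm_nonneg R)
    -- norm of the integral term
    have hint : ‖∫ r in (0:ℝ)..b, Complex.exp (-(lam * r)) • T r (R1 x - x)‖ ≤ J * ‖x‖ := by
      rcases hJ with h | h
      · have hbd : ∀ r ∈ Set.uIoc (0:ℝ) b,
            ‖Complex.exp (-(lam * r)) • T r (R1 x - x)‖ ≤ ω 0 * ‖x‖ := by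
          intro r hr
          rw [Set.uIoc_of_le hb] at hr
          have hr0 : (0:ℝ) ≤ r := le_of_lt hr.1
          rw [norm_smul]
          calc ‖Complex.exp (-(lam * r))‖ * ‖T r (R1 x - x)‖
              ≤ 1 * (ω r * ‖x‖) := by
                apply mul_le_mul (exp_abs_le hre hr0) (Tu_bound hω_dom hr0 x)
                  (norm_nonneg _) zero_le_one
            _ = ω r * ‖x‖ := one_mul _
            _ ≤ ω 0 * ‖x‖ :=
                mul_le_mul_of_nonneg_right (hωb0 r hr0) (norm_nonneg x)
        have := intervalIntegral.norm_integral_le_of_norm_le_const hbd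
        calc ‖∫ r in (0:ℝ)..b, Complex.exp (-(lam * r)) • T r (R1 x - x)‖
            ≤ ω 0 * ‖x‖ * |b - 0| := this
          _ = b * ω 0 * ‖x‖ := by rw [sub_zero, abs_of_nonneg hb]; ring
          _ ≤ J * ‖x‖ := mul_le_mul_of_nonneg_right h (norm_nonneg x)
      · -- integration by parts bound
        have hsplit := sg_integral_split hT hA ⟨hxd, hAx'⟩ lam hb
        have hTb : ∀ r : ℝ, 0 ≤ r → ‖T r (R1 x)‖ ≤ M * (‖R1‖ * ‖x‖) := by
          intro r hr
          calc ‖T r (R1 x)‖ ≤ ‖T r‖ * ‖R1 x‖ := (T r).le_opNorm _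
            _ ≤ M * (‖R1‖ * ‖x‖) := by
                apply mul_le_mul (hM r hr) (R1.le_opNorm x) (norm_nonneg _)
                exact le_trans zero_le_one hM1
        have hin2 : ‖∫ r in (0:ℝ)..b, Complex.exp (-(lam * r)) • T r (R1 x)‖
            ≤ M * (‖R1‖ * ‖x‖) * b := by
          have hbd : ∀ r ∈ Set.uIoc (0:ℝ) b,
              ‖Complex.exp (-(lam * r)) • T r (R1 x)‖ ≤ M * (‖R1‖ * ‖x‖) := by
            intro r hr
            rw [Set.uIoc_of_le hb] at hr
            have hr0 : (0:ℝ) ≤ r := le_of_lt hr.1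
            rw [norm_smul]
            calc ‖Complex.exp (-(lam * r))‖ * ‖T r (R1 x)‖
                ≤ 1 * (M * (‖R1‖ * ‖x‖)) := by
                  apply mul_le_mul (exp_abs_le hre hr0) (hTb r hr0) (norm_nonneg _)
                    zero_le_one
              _ = M * (‖R1‖ * ‖x‖) := one_mul _
          have := intervalIntegral.norm_integral_le_of_norm_le_const hbd
          calc ‖∫ r in (0:ℝ)..b, Complex.exp (-(lam * r)) • T r (R1 x)‖
              ≤ M * (‖R1‖ * ‖x‖) * |b - 0| := this
            _ = M * (‖R1‖ * ‖x‖) * b := by rw [sub_zero, abs_of_nonneg hb]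
        rw [hsplit]
        have h1 : ‖Complex.exp (-(lam * b)) • T b (R1 x)‖ ≤ M * (‖R1‖ * ‖x‖) := by
          rw [norm_smul]
          calc ‖Complex.exp (-(lam * b))‖ * ‖T b (R1 x)‖
              ≤ 1 * (M * (‖R1‖ * ‖x‖)) := by
                apply mul_le_mul (exp_abs_le hre hb) (hTb b hb) (norm_nonneg _) zero_le_one
            _ = M * (‖R1‖ * ‖x‖) := one_mul _
        have h2 : ‖R1 x‖ ≤ ‖R1‖ * ‖x‖ := R1.le_opNorm x
        have h3 : ‖lam • ∫ r in (0:ℝ)..b, Complex.exp (-(lam * r)) • T r (R1 x)‖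
            ≤ ‖lam‖ * (M * (‖R1‖ * ‖x‖) * b) := by
          rw [norm_smul]
          exact mul_le_mul_of_nonneg_left hin2 (norm_nonneg _)
        calc ‖Complex.exp (-(lam * b)) • T b (R1 x) - R1 x
              + lam • ∫ r in (0:ℝ)..b, Complex.exp (-(lam * r)) • T r (R1 x)‖
            ≤ ‖Complex.exp (-(lam * b)) • T b (R1 x) - R1 x‖
              + ‖lam • ∫ r in (0:ℝ)..b, Complex.exp (-(lam * r)) • T r (R1 x)‖ :=
              norm_add_le _ _
          _ ≤ (‖Complex.exp (-(lam * b)) • T b (R1 x)‖ + ‖R1 x‖)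
              + ‖lam‖ * (M * (‖R1‖ * ‖x‖) * b) := by
              exact add_le_add (norm_sub_le _ _) h3
          _ ≤ (M * (‖R1‖ * ‖x‖) + ‖R1‖ * ‖x‖)
              + ‖lam‖ * (M * (‖R1‖ * ‖x‖) * b) := by
              exact add_le_add (add_le_add h1 h2) le_rfl
          _ ≤ M * ‖R1‖ * (2 + ‖lam‖ * b) * ‖x‖ := by
              have hR1x : 0 ≤ ‖R1‖ * ‖x‖ := mul_nonneg (norm_nonneg _) (norm_nonneg _)
              have hab : 0 ≤ ‖lam‖ * b := mul_nonneg (norm_nonneg _) hb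
              nlinarith [hR1x, hab]
          _ ≤ J * ‖x‖ := mul_le_mul_of_nonneg_right h (norm_nonneg x)
    -- combine
    have hRub : ‖R (R1 x - x)‖ ≤ ω b * ‖R‖ * ‖x‖ + J * ‖x‖ := by
      rw [hid]
      calc ‖Complex.exp (-(lam * b)) • R (T b (R1 x - x))
            + ∫ r in (0:ℝ)..b, Complex.exp (-(lam * r)) • T r (R1 x - x)‖
          ≤ ‖Complex.exp (-(lam * b)) • R (T b (R1 x - x))‖
            + ‖∫ r in (0:ℝ)..b, Complex.exp (-(lam * r)) • T r (R1 x - x)‖ :=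
            norm_add_le _ _
        _ ≤ ‖R‖ * (ω b * ‖x‖) + J * ‖x‖ := add_le_add hbt hint
        _ = ω b * ‖R‖ * ‖x‖ + J * ‖x‖ := by ring
    calc ‖R x‖ = ‖lam⁻¹ • R1 x + (lam⁻¹ - 1) • R (R1 x - x)‖ := by rw [key]
      _ ≤ ‖lam⁻¹ • R1 x‖ + ‖(lam⁻¹ - 1) • R (R1 x - x)‖ := norm_add_le _ _
      _ ≤ (‖lam‖)⁻¹ * (‖R1‖ * ‖x‖) + q * (ω b * ‖R‖ * ‖x‖ + J * ‖x‖) := by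
          apply add_le_add
          · rw [norm_smul]
            simp only [norm_inv]
            exact mul_le_mul_of_nonneg_left (R1.le_opNorm x) (by positivity)
          · rw [norm_smul, hq]
            exact mul_le_mul_of_nonneg_left hRub (norm_nonneg _)
      _ = (‖R1‖ / ‖lam‖ + q * (ω b * ‖R‖ + J)) * ‖x‖ := by
          field_simp
  apply R.opNorm_le_bound _ hpt
  have hq0 : 0 ≤ q := norm_nonneg _
  have h1 : 0 ≤ ‖R1‖ / ‖lam‖ := by positivity
  have h2 : 0 ≤ ω b := hω0 b hb
  have h3 : 0 ≤ ω b * ‖R‖ + J := by positivity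
  positivity
end Master


section Reach
variable {T : ℝ → X →L[ℂ] X} {A : X →ₗ.[ℂ] X} {R1 : X →L[ℂ] X} {ω : ℝ → ℝ}

lemma bound_of_theta (hT : IsC0Semigroup T) (hA : IsGenerator T A)
    (hR1 : IsResolventAt A 1 R1)
    (hω_anti : AntitoneOn ω (Set.Ici (0:ℝ)))
    (hω_dom : ∀ t : ℝ, 0 ≤ t → ‖(T t).comp (R1 - 1)‖ ≤ ω t)
    {M : ℝ} (hM1 : 1 ≤ M) (hM : ∀ t : ℝ, 0 ≤ t → ‖T t‖ ≤ M)
    {lam : ℂ} (hre : 0 ≤ lam.re) (h0 : lam ≠ 0)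
    {R : X →L[ℂ] X} (hR : IsResolventAt A lam R)
    {b : ℝ} (hb : 0 ≤ b) {J : ℝ} (hJ0 : 0 ≤ J)
    (hJ : b * ω 0 ≤ J ∨ M * ‖R1‖ * (2 + ‖lam‖ * b) ≤ J)
    {θ : ℝ} (hθ : θ < 1) (hqω : ‖lam⁻¹ - 1‖ * ω b ≤ θ) :
    ‖R‖ ≤ (1 - θ)⁻¹ * (‖R1‖ / ‖lam‖ + ‖lam⁻¹ - 1‖ * J) := by
  have hm := master_bound hT hA hR1 hω_anti hω_dom hM1 hM hre h0 hR hb hJ0 hJ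
  set q : ℝ := ‖lam⁻¹ - 1‖ with hq
  set D : ℝ := ‖R1‖ / ‖lam‖ with hD
  have hq0 : 0 ≤ q := norm_nonneg _
  have hD0 : 0 ≤ D := by
    rw [hD]; positivity
  have hR0 : 0 ≤ ‖R‖ := norm_nonneg _
  have h1 : q * (ω b * ‖R‖) ≤ θ * ‖R‖ := by
    have := mul_le_mul_of_nonneg_right hqω hR0
    calc q * (ω b * ‖R‖) = q * ω b * ‖R‖ := by ring
      _ ≤ θ * ‖R‖ := this
  have h2 : (1 - θ) * ‖R‖ ≤ D + q * J := by nlinarith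
  have h3 : 0 < 1 - θ := by linarith
  calc ‖R‖ = (1 - θ)⁻¹ * ((1 - θ) * ‖R‖) := by field_simp
    _ ≤ (1 - θ)⁻¹ * (D + q * J) := by
        apply mul_le_mul_of_nonneg_left h2 (le_of_lt (inv_pos.2 h3))

lemma reach (hT : IsC0Semigroup T) (hA : IsGenerator T A)
    (hR1 : IsResolventAt A 1 R1)
    (hω_anti : AntitoneOn ω (Set.Ici (0:ℝ)))
    (hω_dom : ∀ t : ℝ, 0 ≤ t → ‖(T t).comp (R1 - 1)‖ ≤ ω t)
    (hω_lim : Filter.Tendsto ω Filter.atTop (nhds 0))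
    {M : ℝ} (hM1 : 1 ≤ M) (hM : ∀ t : ℝ, 0 ≤ t → ‖T t‖ ≤ M)
    (mu : ℂ) (hmu : 0 < mu.re) :
    ∃ R : X →L[ℂ] X, IsResolventAt A mu R := by
  set ε : ℝ := min mu.re 1 with hε
  have hε0 : 0 < ε := lt_min hmu one_pos
  have hε1 : ε ≤ 1 := min_le_right _ _
  set Q : ℝ := ‖mu - 1‖ / ε with hQ
  have hQ0 : 0 ≤ Q := by rw [hQ]; positivity
  -- choose t₀
  have hev : ∀ᶠ t in Filter.atTop, ω t < (2 * (Q + 1))⁻¹ := by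
    apply hω_lim.eventually_lt_const
    positivity
  obtain ⟨t₀, ht₀, ht₀ω⟩ := ((eventually_ge_atTop (0:ℝ)).and hev).exists
  set C : ℝ := 2 * (‖R1‖ / ε + Q * (t₀ * ω 0)) + 1 with hC
  have hω00 : 0 ≤ ω 0 := le_trans (norm_nonneg _) (hω_dom 0 le_rfl)
  have hC1 : 1 ≤ C := by
    rw [hC]
    have h4 : 0 ≤ ‖R1‖ / ε := by positivity
    have h5 : 0 ≤ Q * (t₀ * ω 0) := mul_nonneg hQ0 (mul_nonneg ht₀ hω00)
    linarith
  have hC0 : 0 < C := lt_of_lt_of_le one_pos hC1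
  -- uniform bound on segment
  have hseg : ∀ τ : ℝ, τ ∈ Set.Icc (0:ℝ) 1 → ∀ R : X →L[ℂ] X,
      IsResolventAt A (1 + (τ:ℂ) * (mu - 1)) R → ‖R‖ ≤ C - 1 := by
    intro τ hτ R hR
    set lam : ℂ := 1 + (τ:ℂ) * (mu - 1) with hlam
    have hlamre : ε ≤ lam.re := by
      have h1 : lam.re = 1 + τ * (mu.re - 1) := by
        rw [hlam]
        simp [Complex.add_re, Complex.mul_re]
      rw [h1]
      have hεmu : ε ≤ mu.re := min_le_left _ _
      nlinarith [hτ.1, hτ.2]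
    have hre : 0 ≤ lam.re := le_trans (le_of_lt hε0) hlamre
    have hlamabs : ε ≤ ‖lam‖ := by
      calc ε ≤ lam.re := hlamre
        _ ≤ |lam.re| := le_abs_self _
        _ ≤ ‖lam‖ := Complex.abs_re_le_norm lam
    have h0 : lam ≠ 0 := by
      intro h
      rw [h] at hlamabs
      simp at hlamabs
      linarith
    have hq : ‖lam⁻¹ - 1‖ ≤ Q := by
      have hfact : lam⁻¹ - 1 = lam⁻¹ * (1 - lam) := by
        field_simp
      rw [hfact, norm_mul, norm_inv]
      have h1lam : ‖1 - lam‖ ≤ ‖mu - 1‖ := by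
        have he : (1 : ℂ) - lam = -((τ:ℂ) * (mu - 1)) := by rw [hlam]; ring
        rw [he, norm_neg, norm_mul, Complex.norm_real, Real.norm_eq_abs, abs_of_nonneg hτ.1]
        calc τ * ‖mu - 1‖ ≤ 1 * ‖mu - 1‖ :=
              mul_le_mul_of_nonneg_right hτ.2 (norm_nonneg _)
          _ = ‖mu - 1‖ := one_mul _
      have hinv : (‖lam‖)⁻¹ ≤ ε⁻¹ := by
        apply inv_anti₀ hε0 hlamabs
      rw [hQ, div_eq_mul_inv, mul_comm (‖mu-1‖) ε⁻¹]
      exact mul_le_mul hinv h1lam (norm_nonneg _) (by positivity)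
    have hωt0 : 0 ≤ ω t₀ := le_trans (norm_nonneg _) (hω_dom t₀ ht₀)
    have hqω : ‖lam⁻¹ - 1‖ * ω t₀ ≤ 1/2 := by
      calc ‖lam⁻¹ - 1‖ * ω t₀ ≤ Q * ω t₀ :=
            mul_le_mul_of_nonneg_right hq hωt0
        _ ≤ Q * (2 * (Q + 1))⁻¹ :=
            mul_le_mul_of_nonneg_left (le_of_lt ht₀ω) hQ0
        _ ≤ 1/2 := by
            rw [mul_inv_le_iff₀ (by positivity)]
            nlinarith
    have hbt := bound_of_theta hT hA hR1 hω_anti hω_dom hM1 hM hre h0 hR ht₀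
      (mul_nonneg ht₀ hω00) (Or.inl le_rfl) (by norm_num : (1:ℝ)/2 < 1) hqω
    have hhalf : ((1:ℝ) - 1/2)⁻¹ = 2 := by norm_num
    rw [hhalf] at hbt
    have hfin : 2 * (‖R1‖ / ‖lam‖ + ‖lam⁻¹ - 1‖ * (t₀ * ω 0))
        ≤ C - 1 := by
      rw [hC]
      have h1 : ‖R1‖ / ‖lam‖ ≤ ‖R1‖ / ε := by
        gcongr
      have h2 : ‖lam⁻¹ - 1‖ * (t₀ * ω 0) ≤ Q * (t₀ * ω 0) := by
        apply mul_le_mul_of_nonneg_right hq (mul_nonneg ht₀ hω00)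
      linarith
    exact le_trans hbt hfin
  -- induction along the segment
  set st : ℝ := (2 * C * (‖mu - 1‖ + 1))⁻¹ with hst
  have hst0 : 0 < st := by positivity
  have hstep : ∀ k : ℕ,
      ∃ R : X →L[ℂ] X, IsResolventAt A (1 + ((min ((k:ℝ) * st) 1 : ℝ) : ℂ) * (mu - 1)) R := by
    intro k
    induction k with
    | zero =>
      refine ⟨R1, ?_⟩
      have e : ((min (((0:ℕ):ℝ) * st) 1 : ℝ) : ℂ) = 0 := by norm_num
      rw [e]
      simpa using hR1
    | succ k ih =>
      obtain ⟨R, hR⟩ := ih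
      set a : ℝ := min ((k:ℝ) * st) 1 with hadef
      set b' : ℝ := min ((((k+1 : ℕ)):ℝ) * st) 1 with hbdef
      have ha01 : a ∈ Set.Icc (0:ℝ) 1 := by
        constructor
        · apply le_min (by positivity) zero_le_one
        · exact min_le_right _ _
      have hRle := hseg a ha01 R hR
      have hcast : (((k+1 : ℕ)):ℝ) = (k:ℝ) + 1 := by push_cast; ring
      have hab : a ≤ b' := by
        apply min_le_min _ le_rfl
        rw [hcast]
        nlinarith [hst0, (Nat.cast_nonneg k : (0:ℝ) ≤ k)]
      have hba : b' ≤ a + st := by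
        rcases le_total ((k:ℝ) * st) 1 with hk | hk
        · rw [hadef, min_eq_left hk]
          calc b' ≤ (((k+1 : ℕ)):ℝ) * st := min_le_left _ _
            _ = (k:ℝ) * st + st := by rw [hcast]; ring
        · rw [hadef, min_eq_right hk]
          calc b' ≤ 1 := min_le_right _ _
            _ ≤ 1 + st := by linarith
      have hdist : ‖(1 + (b':ℂ) * (mu - 1)) - (1 + (a:ℂ) * (mu - 1))‖
          ≤ st * ‖mu - 1‖ := by
        have he : (1 + (b':ℂ) * (mu - 1)) - (1 + (a:ℂ) * (mu - 1))
            = ((b' - a : ℝ) : ℂ) * (mu - 1) := by push_cast; ring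
        rw [he, norm_mul, Complex.norm_real, Real.norm_eq_abs, abs_of_nonneg (by linarith : (0:ℝ) ≤ b' - a)]
        apply mul_le_mul_of_nonneg_right _ (norm_nonneg _)
        linarith
      have hsmall : ‖(1 + (b':ℂ) * (mu - 1)) - (1 + (a:ℂ) * (mu - 1))‖ * ‖R‖ < 1 := by
        have h1 : ‖(1 + (b':ℂ) * (mu - 1)) - (1 + (a:ℂ) * (mu - 1))‖ * ‖R‖
            ≤ (st * ‖mu - 1‖) * C := by
          apply mul_le_mul hdist (by linarith) (norm_nonneg _)
          positivity
        have h2 : (st * ‖mu - 1‖) * C ≤ 1/2 := by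
          have hm0 : 0 ≤ ‖mu - 1‖ := norm_nonneg _
          rw [hst]
          rw [show ((2*C*(‖mu-1‖+1))⁻¹ * ‖mu-1‖) * C
              = ‖mu-1‖ * C / (2*C*(‖mu-1‖+1)) from by ring]
          rw [div_le_div_iff₀ (by positivity) (by norm_num : (0:ℝ) < 2)]
          nlinarith [hC0, hm0]
        exact lt_of_le_of_lt (le_trans h1 h2) (by norm_num)
      obtain ⟨S, hS, _⟩ := neumann hR hsmall
      exact ⟨S, hS⟩
  obtain ⟨n, hn⟩ := exists_nat_ge st⁻¹
  have hn1 : 1 ≤ (n:ℝ) * st := by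
    calc (1:ℝ) = st⁻¹ * st := by field_simp
      _ ≤ (n:ℝ) * st := by
          apply mul_le_mul_of_nonneg_right hn (le_of_lt hst0)
  obtain ⟨R, hR⟩ := hstep n
  rw [min_eq_right hn1] at hR
  refine ⟨R, ?_⟩
  have : (1 : ℂ) + ((1:ℝ):ℂ) * (mu - 1) = mu := by push_cast; ring
  rwa [this] at hR
end Reach


section Boundary
variable {T : ℝ → X →L[ℂ] X} {A : X →ₗ.[ℂ] X} {R1 : X →L[ℂ] X} {ω : ℝ → ℝ}

omit [CompleteSpace X] in
lemma lam_facts {s ε : ℝ} (hs : s ≠ 0) (hε : 0 < ε) :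
    ((ε:ℂ) + Complex.I * s).re = ε ∧ ((ε:ℂ) + Complex.I * s) ≠ 0 ∧
      |s| ≤ ‖(ε:ℂ) + Complex.I * s‖ ∧
      ‖(ε:ℂ) + Complex.I * s‖ ≤ ε + |s| := by
  have hre : ((ε:ℂ) + Complex.I * s).re = ε := by simp
  have him : ((ε:ℂ) + Complex.I * s).im = s := by simp
  refine ⟨hre, ?_, ?_, ?_⟩
  · intro h
    rw [h] at hre
    simp at hre
    linarith
  · calc |s| = |((ε:ℂ) + Complex.I * s).im| := by rw [him]
      _ ≤ ‖(ε:ℂ) + Complex.I * s‖ := Complex.abs_im_le_norm _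
  · calc ‖(ε:ℂ) + Complex.I * s‖
        ≤ ‖(ε:ℂ)‖ + ‖Complex.I * s‖ := norm_add_le _ _
      _ = |ε| + |s| := by simp
      _ = ε + |s| := by rw [abs_of_pos hε]

lemma eps_bound (hT : IsC0Semigroup T) (hA : IsGenerator T A)
    (hR1 : IsResolventAt A 1 R1)
    (hω_anti : AntitoneOn ω (Set.Ici (0:ℝ)))
    (hω_dom : ∀ t : ℝ, 0 ≤ t → ‖(T t).comp (R1 - 1)‖ ≤ ω t)
    {M : ℝ} (hM1 : 1 ≤ M) (hM : ∀ t : ℝ, 0 ≤ t → ‖T t‖ ≤ M)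
    {s ε : ℝ} (hs : s ≠ 0) (hε : 0 < ε) (hε1 : ε ≤ 1) (hεs : ε ≤ |s|)
    {R : X →L[ℂ] X} (hR : IsResolventAt A ((ε:ℂ) + Complex.I * s) R)
    {b : ℝ} (hb : 0 ≤ b) {J : ℝ} (hJ0 : 0 ≤ J)
    (hJ : b * ω 0 ≤ J ∨ M * ‖R1‖ * (2 + (2 * |s|) * b) ≤ J)
    {θ : ℝ} (hθ : θ < 1) (hqb : (1 / |s| + 1) * ω b ≤ θ) :
    ‖R‖ ≤ (1 - θ)⁻¹ * (‖R1‖ / |s| + (1 / |s| + 1) * J) := by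
  set lam : ℂ := (ε:ℂ) + Complex.I * s with hlam
  obtain ⟨hre, h0, habs1, habs2⟩ := lam_facts hs hε
  have hs0 : 0 < |s| := abs_pos.2 hs
  have hre0 : 0 ≤ lam.re := by rw [hre]; exact le_of_lt hε
  have hωb : 0 ≤ ω b := le_trans (norm_nonneg _) (hω_dom b hb)
  -- q bound
  have hq : ‖lam⁻¹ - 1‖ ≤ 1 / |s| + 1 := by
    calc ‖lam⁻¹ - 1‖ ≤ ‖lam⁻¹‖ + ‖(1:ℂ)‖ := by
          exact norm_sub_le _ _
      _ = (‖lam‖)⁻¹ + 1 := by rw [norm_inv]; simp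
      _ ≤ |s|⁻¹ + 1 := by
          have := inv_anti₀ hs0 habs1
          linarith
      _ = 1 / |s| + 1 := by rw [one_div]
  -- J hypothesis for master
  have hJ' : b * ω 0 ≤ J ∨ M * ‖R1‖ * (2 + ‖lam‖ * b) ≤ J := by
    rcases hJ with h | h
    · exact Or.inl h
    · refine Or.inr (le_trans ?_ h)
      have h2s : ‖lam‖ ≤ 2 * |s| := by
        calc ‖lam‖ ≤ ε + |s| := habs2
          _ ≤ 2 * |s| := by linarith
      have hMR : 0 ≤ M * ‖R1‖ :=
        mul_nonneg (le_trans zero_le_one hM1) (norm_nonneg _)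
      apply mul_le_mul_of_nonneg_left _ hMR
      have := mul_le_mul_of_nonneg_right h2s hb
      linarith
  have hqω : ‖lam⁻¹ - 1‖ * ω b ≤ θ := by
    calc ‖lam⁻¹ - 1‖ * ω b ≤ (1 / |s| + 1) * ω b :=
          mul_le_mul_of_nonneg_right hq hωb
      _ ≤ θ := hqb
  have hbt := bound_of_theta hT hA hR1 hω_anti hω_dom hM1 hM hre0 h0 hR hb hJ0 hJ' hθ hqω
  have hmono : ‖R1‖ / ‖lam‖ + ‖lam⁻¹ - 1‖ * J
      ≤ ‖R1‖ / |s| + (1 / |s| + 1) * J := by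
    have h1 : ‖R1‖ / ‖lam‖ ≤ ‖R1‖ / |s| := by gcongr
    have h2 : ‖lam⁻¹ - 1‖ * J ≤ (1 / |s| + 1) * J :=
      mul_le_mul_of_nonneg_right hq hJ0
    linarith
  calc ‖R‖ ≤ (1 - θ)⁻¹ * (‖R1‖ / ‖lam‖ + ‖lam⁻¹ - 1‖ * J) := hbt
    _ ≤ (1 - θ)⁻¹ * (‖R1‖ / |s| + (1 / |s| + 1) * J) := by
        apply mul_le_mul_of_nonneg_left hmono
        have : (0:ℝ) < 1 - θ := by linarith
        positivity

lemma limit_boundary (hT : IsC0Semigroup T) (hA : IsGenerator T A)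
    (hR1 : IsResolventAt A 1 R1)
    (hω_anti : AntitoneOn ω (Set.Ici (0:ℝ)))
    (hω_dom : ∀ t : ℝ, 0 ≤ t → ‖(T t).comp (R1 - 1)‖ ≤ ω t)
    (hω_lim : Filter.Tendsto ω Filter.atTop (nhds 0))
    {M : ℝ} (hM1 : 1 ≤ M) (hM : ∀ t : ℝ, 0 ≤ t → ‖T t‖ ≤ M)
    {s : ℝ} (hs : s ≠ 0) {B : ℝ} (hB : 0 ≤ B)
    (hbound : ∀ ε : ℝ, 0 < ε → ε ≤ 1 → ε ≤ |s| → ∀ R : X →L[ℂ] X,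
      IsResolventAt A ((ε:ℂ) + Complex.I * s) R → ‖R‖ ≤ B) :
    ∃ R : X →L[ℂ] X, IsResolventAt A (Complex.I * s) R ∧ ‖R‖ ≤ 2 * B := by
  have hs0 : 0 < |s| := abs_pos.2 hs
  set ε : ℝ := min (min 1 |s|) ((2 * (B + 1))⁻¹) with hε
  have hε0 : 0 < ε := by
    apply lt_min (lt_min one_pos hs0)
    positivity
  have hε1 : ε ≤ 1 := le_trans (min_le_left _ _) (min_le_left _ _)
  have hεs : ε ≤ |s| := le_trans (min_le_left _ _) (min_le_right _ _)
  have hεB : ε ≤ (2 * (B + 1))⁻¹ := min_le_right _ _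
  obtain ⟨Rε, hRε⟩ := reach hT hA hR1 hω_anti hω_dom hω_lim hM1 hM ((ε:ℂ) + Complex.I * s)
    (by rw [(lam_facts hs hε0).1]; exact hε0)
  have hRεB : ‖Rε‖ ≤ B := hbound ε hε0 hε1 hεs Rε hRε
  have hdist : ‖(Complex.I * (s:ℂ)) - ((ε:ℂ) + Complex.I * s)‖ = ε := by
    rw [show (Complex.I * (s:ℂ)) - ((ε:ℂ) + Complex.I * s) = -(ε:ℂ) from by ring]
    simp [abs_of_pos hε0]
  have hsmall : ‖(Complex.I * (s:ℂ)) - ((ε:ℂ) + Complex.I * s)‖ * ‖Rε‖ < 1 := by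
    rw [hdist]
    have h1 : ε * ‖Rε‖ ≤ (2 * (B + 1))⁻¹ * B := by
      apply mul_le_mul hεB hRεB (norm_nonneg _)
      positivity
    have h2 : (2 * (B + 1))⁻¹ * B < 1 := by
      rw [inv_mul_lt_iff₀ (by positivity)]
      nlinarith
    linarith
  obtain ⟨S, hS, hSn⟩ := neumann hRε hsmall
  refine ⟨S, hS, ?_⟩
  have hden : (1:ℝ)/2 ≤ 1 - ‖(Complex.I * (s:ℂ)) - ((ε:ℂ) + Complex.I * s)‖ * ‖Rε‖ := by
    rw [hdist]
    have h1 : ε * ‖Rε‖ ≤ (2 * (B + 1))⁻¹ * B := by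
      apply mul_le_mul hεB hRεB (norm_nonneg _)
      positivity
    have h2 : (2 * (B + 1))⁻¹ * B ≤ 1/2 := by
      rw [inv_mul_le_iff₀ (by positivity)]
      nlinarith
    linarith
  calc ‖S‖ ≤ ‖Rε‖ / (1 - ‖(Complex.I * (s:ℂ)) - ((ε:ℂ) + Complex.I * s)‖ * ‖Rε‖) := hSn
    _ ≤ B / (1/2) := by
        apply div_le_div₀ hB hRεB (by norm_num) hden
    _ = 2 * B := by ring

end Boundary


section Assemble
variable {T : ℝ → X →L[ℂ] X} {A : X →ₗ.[ℂ] X} {R1 : X →L[ℂ] X} {ω : ℝ → ℝ}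

lemma exists_res_boundary (hT : IsC0Semigroup T) (hA : IsGenerator T A)
    (hR1 : IsResolventAt A 1 R1)
    (hω_anti : AntitoneOn ω (Set.Ici (0:ℝ)))
    (hω_dom : ∀ t : ℝ, 0 ≤ t → ‖(T t).comp (R1 - 1)‖ ≤ ω t)
    (hω_lim : Filter.Tendsto ω Filter.atTop (nhds 0))
    {M : ℝ} (hM1 : 1 ≤ M) (hM : ∀ t : ℝ, 0 ≤ t → ‖T t‖ ≤ M)
    (ωstar : ℝ → ℝ)
    (hωstar : ∀ s : ℝ, 0 < s →
      0 ≤ ωstar s ∧ ω (ωstar s) ≤ s ∧ ∀ t : ℝ, 0 ≤ t → ω t ≤ s → ωstar s ≤ t)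
    {s : ℝ} (hs : s ≠ 0) :
    ∃ R : X →L[ℂ] X, IsResolventAt A (Complex.I * s) R ∧
      ‖R‖ ≤ 2 * (2 * (‖R1‖ / |s| + (1/|s| + 1) * (ωstar (|s| / (2 * (1 + |s|))) * ω 0))) := by
  have hs0 : 0 < |s| := abs_pos.2 hs
  have harg : 0 < |s| / (2 * (1 + |s|)) := by positivity
  obtain ⟨hb0, hbω, -⟩ := hωstar _ harg
  set b : ℝ := ωstar (|s| / (2 * (1 + |s|))) with hbdef
  have hω00 : 0 ≤ ω 0 := le_trans (norm_nonneg _) (hω_dom 0 le_rfl)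
  have hωb0 : 0 ≤ ω b := le_trans (norm_nonneg _) (hω_dom b hb0)
  have hqb : (1 / |s| + 1) * ω b ≤ 1/2 := by
    have h1 : (1 / |s| + 1) * ω b ≤ (1 / |s| + 1) * (|s| / (2 * (1 + |s|))) := by
      apply mul_le_mul_of_nonneg_left hbω
      positivity
    have h2 : (1 / |s| + 1) * (|s| / (2 * (1 + |s|))) = 1/2 := by
      field_simp
    linarith
  have hB0 : 0 ≤ 2 * (‖R1‖ / |s| + (1/|s| + 1) * (b * ω 0)) := by positivity
  obtain ⟨R, hR, hRn⟩ := limit_boundary hT hA hR1 hω_anti hω_dom hω_lim hM1 hM hs hB0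
    (fun ε hε hε1 hεs R hR => by
      have := eps_bound hT hA hR1 hω_anti hω_dom hM1 hM hs hε hε1 hεs hR hb0
        (mul_nonneg hb0 hω00) (Or.inl le_rfl)
        (by norm_num : (1:ℝ)/2 < 1) hqb
      calc ‖R‖ ≤ (1 - 1/2 : ℝ)⁻¹ * (‖R1‖ / |s| + (1 / |s| + 1) * (b * ω 0)) := this
        _ = 2 * (‖R1‖ / |s| + (1/|s| + 1) * (b * ω 0)) := by norm_num)
  exact ⟨R, hR, hRn⟩

end Assemble


/-- **Theorem 2.2.**  Let `T` be a bounded C₀-semigroup with generator `A`, let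
`R1 = R(1, A)` (so that `A R(1,A) = R1 - 1`), and let `ω` be a dominating function
for `T`, i.e. `ω` is decreasing, positive and `‖T(t) A R(1,A)‖ ≤ ω(t)` for `t ≥ 0`,
with `ω(t) → 0` as `t → ∞`.  Let `ωstar` be the function
`ω*(s) = min {t ≥ 0 : ω(t) ≤ s}`.  Then `iσ(A) ∩ ℝ ⊆ {0}`, the resolvent exists and
is uniformly bounded on `{is : |s| ≥ 1}`, and for every `c ∈ (0,1)` one has
`‖R(is, A)‖ = O(1/|s| + ω*(c|s|))` as `s → 0`. -/
theorem resolvent_bound_from_decay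
    {X : Type*} [NormedAddCommGroup X] [NormedSpace ℂ X] [CompleteSpace X]
    (T : ℝ → X →L[ℂ] X) (A : X →ₗ.[ℂ] X)
    (hT : IsC0Semigroup T) (hTb : IsBoundedSG T) (hA : IsGenerator T A)
    (R1 : X →L[ℂ] X) (hR1 : IsResolventAt A 1 R1)
    (ω : ℝ → ℝ)
    (hω_anti : AntitoneOn ω (Set.Ici (0 : ℝ)))
    (hω_pos : ∀ t : ℝ, 0 ≤ t → 0 < ω t)
    (hω_dom : ∀ t : ℝ, 0 ≤ t → ‖(T t).comp (R1 - 1)‖ ≤ ω t)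
    (hω_lim : Filter.Tendsto ω Filter.atTop (nhds 0))
    (ωstar : ℝ → ℝ)
    (hωstar : ∀ s : ℝ, 0 < s →
      0 ≤ ωstar s ∧ ω (ωstar s) ≤ s ∧ ∀ t : ℝ, 0 ≤ t → ω t ≤ s → ωstar s ≤ t) :
    bSpec A ⊆ {0} ∧
    (∃ C : ℝ, ∀ s : ℝ, 1 ≤ |s| →
      ∃ R : X →L[ℂ] X, IsResolventAt A (Complex.I * (s : ℂ)) R ∧ ‖R‖ ≤ C) ∧
    (∀ c : ℝ, 0 < c → c < 1 →
      ∃ K : ℝ, 0 < K ∧ ∃ δ : ℝ, 0 < δ ∧ ∀ s : ℝ, 0 < |s| → |s| < δ →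
        ∃ R : X →L[ℂ] X, IsResolventAt A (Complex.I * (s : ℂ)) R ∧
          ‖R‖ ≤ K * (1 / |s| + ωstar (c * |s|))) := by
  classical
  obtain ⟨M0, hM0⟩ := hTb
  set M : ℝ := max M0 1 with hMdef
  have hM1 : 1 ≤ M := le_max_right _ _
  have hM : ∀ t : ℝ, 0 ≤ t → ‖T t‖ ≤ M := fun t ht =>
    le_trans (hM0 t ht) (le_max_left _ _)
  have hω00 : 0 ≤ ω 0 := le_of_lt (hω_pos 0 le_rfl)
  have hr0 : (0:ℝ) ≤ ‖R1‖ := norm_nonneg _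
  refine ⟨?_, ?_, ?_⟩
  · -- spectrum on the imaginary axis is contained in {0}
    intro s hsmem
    by_contra hs0
    have hs : s ≠ 0 := hs0
    have hns : (-s : ℝ) ≠ 0 := neg_ne_zero.2 hs
    obtain ⟨R, hR, -⟩ := exists_res_boundary hT hA hR1 hω_anti hω_dom hω_lim hM1 hM
      ωstar hωstar hns
    have heq : Complex.I * ((-s : ℝ) : ℂ) = -Complex.I * (s : ℂ) := by
      push_cast
      ring
    rw [heq] at hR
    exact hsmem ⟨R, hR⟩
  · -- uniform bound for |s| ≥ 1
    obtain ⟨hw4, hw4ω, -⟩ := hωstar (1/4) (by norm_num)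
    refine ⟨2 * (2 * (‖R1‖ + 2 * (ωstar (1/4) * ω 0))), ?_⟩
    intro s hs1
    have hs0 : 0 < |s| := lt_of_lt_of_le one_pos hs1
    have hs : s ≠ 0 := fun h => by simp [h] at hs0
    obtain ⟨R, hR, hRn⟩ := exists_res_boundary hT hA hR1 hω_anti hω_dom hω_lim hM1 hM
      ωstar hωstar hs
    refine ⟨R, hR, le_trans hRn ?_⟩
    have harg : 0 < |s| / (2 * (1 + |s|)) := by positivity
    obtain ⟨hb0, hbω, hbmin⟩ := hωstar _ harg
    have hble : ωstar (|s| / (2 * (1 + |s|))) ≤ ωstar (1/4) := by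
      apply hbmin _ hw4
      calc ω (ωstar (1/4)) ≤ 1/4 := hw4ω
        _ ≤ |s| / (2 * (1 + |s|)) := by
            rw [le_div_iff₀ (by positivity)]
            linarith
    have h1 : ‖R1‖ / |s| ≤ ‖R1‖ := by
      calc ‖R1‖ / |s| ≤ ‖R1‖ / 1 := by gcongr
        _ = ‖R1‖ := div_one _
    have h2 : 1 / |s| + 1 ≤ 2 := by
      have : 1 / |s| ≤ 1 := by
        rw [div_le_one hs0]; exact hs1
      linarith
    have h3 : ωstar (|s| / (2 * (1 + |s|))) * ω 0 ≤ ωstar (1/4) * ω 0 :=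
      mul_le_mul_of_nonneg_right hble hω00
    have h4 : (1 / |s| + 1) * (ωstar (|s| / (2 * (1 + |s|))) * ω 0)
        ≤ 2 * (ωstar (1/4) * ω 0) := by
      apply mul_le_mul h2 h3 (mul_nonneg hb0 hω00)
      norm_num
    have h5 : (0:ℝ) ≤ 1 / |s| + 1 := by positivity
    linarith
  · -- quantitative bound near 0
    intro c hc0 hc1
    set K : ℝ := (4 / (1 - c)) * (‖R1‖ + 4 * (M * ‖R1‖)) + 1 with hKdef
    have hc2 : 0 < 1 - c := by linarith
    have hMr : (0:ℝ) ≤ M * ‖R1‖ := mul_nonneg (le_trans zero_le_one hM1) hr0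
    have hK0 : 0 < K := by
      rw [hKdef]
      have : (0:ℝ) ≤ (4 / (1 - c)) * (‖R1‖ + 4 * (M * ‖R1‖)) := by positivity
      linarith
    refine ⟨K, hK0, min 1 ((1 - c) / (2 * c)), lt_min one_pos (by positivity), ?_⟩
    intro s hs0 hsδ
    have hs : s ≠ 0 := fun h => by simp [h] at hs0
    have hm1 : |s| ≤ 1 := le_of_lt (lt_of_lt_of_le hsδ (min_le_left _ _))
    have hm2 : |s| ≤ (1 - c) / (2 * c) := le_of_lt (lt_of_lt_of_le hsδ (min_le_right _ _))
    obtain ⟨hb0, hbω, -⟩ := hωstar (c * |s|) (by positivity)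
    set w : ℝ := ωstar (c * |s|) with hwdef
    set θ : ℝ := (1 + c) / 2 with hθdef
    have hθ1 : θ < 1 := by rw [hθdef]; linarith
    set J : ℝ := M * ‖R1‖ * (2 + (2 * |s|) * w) with hJdef
    have hJ0 : 0 ≤ J := by
      rw [hJdef]
      have : (0:ℝ) ≤ 2 * |s| * w := by positivity
      positivity
    have hωw0 : 0 ≤ ω w := le_of_lt (hω_pos w hb0)
    have hqb : (1 / |s| + 1) * ω w ≤ θ := by
      have h1 : (1 / |s| + 1) * ω w ≤ (1 / |s| + 1) * (c * |s|) := by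
        apply mul_le_mul_of_nonneg_left hbω
        positivity
      have h2 : (1 / |s| + 1) * (c * |s|) = c * (1 + |s|) := by
        field_simp
      have h3 : c * |s| ≤ (1 - c) / 2 := by
        have := mul_le_mul_of_nonneg_left hm2 (le_of_lt hc0)
        calc c * |s| ≤ c * ((1 - c) / (2 * c)) := this
          _ = (1 - c) / 2 := by field_simp
      rw [hθdef]
      nlinarith
    have hB0 : 0 ≤ (1 - θ)⁻¹ * (‖R1‖ / |s| + (1 / |s| + 1) * J) := by
      have hθ2 : 0 < 1 - θ := by linarith
      positivity
    obtain ⟨R, hR, hRn⟩ := limit_boundary hT hA hR1 hω_anti hω_dom hω_lim hM1 hM hs hB0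
      (fun ε hε hε1 hεs R hR =>
        eps_bound hT hA hR1 hω_anti hω_dom hM1 hM hs hε hε1 hεs hR hb0 hJ0
          (Or.inr le_rfl) hθ1 hqb)
    refine ⟨R, hR, le_trans hRn ?_⟩
    -- now the arithmetic
    have hinv : (1 - θ)⁻¹ = 2 / (1 - c) := by
      rw [hθdef, show (1:ℝ) - (1 + c)/2 = (1 - c)/2 from by ring, inv_div]
    have hone : 1 ≤ 1 / |s| := by
      rw [le_div_iff₀ hs0]; linarith
    have hA1 : 1 / |s| + 1 ≤ 2 / |s| := by
      have : (2:ℝ) / |s| = 1 / |s| + 1 / |s| := by ring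
      linarith
    have hJval : (2 / |s|) * (M * ‖R1‖ * (2 + 2 * |s| * w))
        = 4 * (M * ‖R1‖) * (1 / |s|) + 4 * (M * ‖R1‖) * w := by
      field_simp
      ring
    have hX : ‖R1‖ / |s| + (1 / |s| + 1) * J
        ≤ (‖R1‖ + 4 * (M * ‖R1‖)) * (1 / |s|) + 4 * (M * ‖R1‖) * w := by
      have hJnn : (0:ℝ) ≤ M * ‖R1‖ * (2 + 2 * |s| * w) := by
        have : (0:ℝ) ≤ 2 * |s| * w := by positivity
        positivity
      have hstep := mul_le_mul_of_nonneg_right hA1 hJnn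
      rw [hJval] at hstep
      have hrm : ‖R1‖ / |s| = ‖R1‖ * (1 / |s|) := by ring
      rw [hJdef]
      have hassoc : (2:ℝ) * |s| * w = (2 * |s|) * w := by ring
      rw [← hassoc] at hstep ⊢
      linarith
    have hfinal : 2 * ((1 - θ)⁻¹ * (‖R1‖ / |s| + (1 / |s| + 1) * J))
        ≤ K * (1 / |s| + w) := by
      rw [hinv]
      have hc4 : (0:ℝ) < 4 / (1 - c) := by positivity
      calc 2 * ((2 / (1 - c)) * (‖R1‖ / |s| + (1 / |s| + 1) * J))
          = (4 / (1 - c)) * (‖R1‖ / |s| + (1 / |s| + 1) * J) := by ring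
        _ ≤ (4 / (1 - c)) * ((‖R1‖ + 4 * (M * ‖R1‖)) * (1 / |s|) + 4 * (M * ‖R1‖) * w) :=
            mul_le_mul_of_nonneg_left hX (le_of_lt hc4)
        _ ≤ (4 / (1 - c)) * ((‖R1‖ + 4 * (M * ‖R1‖)) * (1 / |s|)
              + (‖R1‖ + 4 * (M * ‖R1‖)) * w) := by
            apply mul_le_mul_of_nonneg_left _ (le_of_lt hc4)
            have : 4 * (M * ‖R1‖) * w ≤ (‖R1‖ + 4 * (M * ‖R1‖)) * w :=
              mul_le_mul_of_nonneg_right (by linarith) hb0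
            linarith
        _ = ((4 / (1 - c)) * (‖R1‖ + 4 * (M * ‖R1‖))) * (1 / |s| + w) := by ring
        _ ≤ K * (1 / |s| + w) := by
            apply mul_le_mul_of_nonneg_right _ (by positivity)
            rw [hKdef]
            linarith
    exact hfinal


end KTpaper
end

section
/- Let X be a complex Banach space and let T be a bounded C₀-semigroup on X with generator A. Suppose that ‖T(t) A R(1, A)‖ → 0 as t → ∞. Then the critical growth bound satisfies δ(T) < 0. -/
open Filter Topology MeasureTheory Set

namespace KTpaper

variable {X : Type*} [NormedAddCommGroup X] [NormedSpace ℂ X] [CompleteSpace X]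

/-! ### Auxiliary lemmas -/

section AuxLemmas

variable {T : ℝ → X →L[ℂ] X} {A : X →ₗ.[ℂ] X} {R1 : X →L[ℂ] X}

lemma T_comm_apply (hT : IsC0Semigroup T) {s t : ℝ} (hs : 0 ≤ s) (ht : 0 ≤ t) (x : X) :
    T s (T t x) = T t (T s x) := by
  have h1 : ((T s).comp (T t)) x = ((T t).comp (T s)) x := by
    rw [← hT.map_add s t hs ht, ← hT.map_add t s ht hs, add_comm]
  simpa using h1

lemma gen_shift (hT : IsC0Semigroup T) {t : ℝ} (ht : 0 ≤ t) {z y : X}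
    (h : Filter.Tendsto (fun k : ℝ => (k : ℂ)⁻¹ • (T k z - z)) (nhdsWithin 0 (Set.Ioi 0)) (nhds y)) :
    Filter.Tendsto (fun k : ℝ => (k : ℂ)⁻¹ • (T k (T t z) - T t z))
      (nhdsWithin 0 (Set.Ioi 0)) (nhds (T t y)) := by
  have h2 : Filter.Tendsto (fun k : ℝ => T t ((k : ℂ)⁻¹ • (T k z - z)))
      (nhdsWithin 0 (Set.Ioi 0)) (nhds (T t y)) := ((T t).continuous.tendsto y).comp h
  refine Filter.Tendsto.congr' ?_ h2
  filter_upwards [self_mem_nhdsWithin] with k hk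
  rw [_root_.map_smul, _root_.map_sub, T_comm_apply hT ht (le_of_lt hk) z]

lemma R1_mem_domain (hR1 : IsResolventAt A 1 R1) (x : X) :
    ∃ h : R1 x ∈ A.domain, A ⟨R1 x, h⟩ = R1 x - x := by
  obtain ⟨h, he⟩ := hR1.1 x
  refine ⟨h, ?_⟩
  rw [one_smul, sub_eq_iff_eq_add] at he
  conv_rhs => rw [he]
  abel

lemma T_mem_domain (hT : IsC0Semigroup T) (hA : IsGenerator T A) {t : ℝ} (ht : 0 ≤ t)
    {z y : X} (hz : ∃ h : z ∈ A.domain, A ⟨z, h⟩ = y) :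
    ∃ h : T t z ∈ A.domain, A ⟨T t z, h⟩ = T t y :=
  (hA (T t z) (T t y)).mpr (gen_shift hT ht ((hA z y).mp hz))

lemma R1_comm (hT : IsC0Semigroup T) (hA : IsGenerator T A) (hR1 : IsResolventAt A 1 R1)
    {t : ℝ} (ht : 0 ≤ t) : R1.comp (T t) = (T t).comp R1 := by
  ext x
  obtain ⟨hd, hAv⟩ := T_mem_domain hT hA ht (R1_mem_domain hR1 x)
  have h2 := hR1.2 ⟨T t (R1 x), hd⟩
  simp only [hAv, one_smul] at h2
  rw [show T t (R1 x) - T t (R1 x - x) = T t x by rw [map_sub, sub_sub_cancel]] at h2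
  simpa using h2

lemma hasDerivWithinAt_T (hT : IsC0Semigroup T) {s : ℝ} (hs : 0 ≤ s) {z y : X}
    (h : Filter.Tendsto (fun k : ℝ => (k : ℂ)⁻¹ • (T k z - z)) (nhdsWithin 0 (Set.Ioi 0)) (nhds y)) :
    HasDerivWithinAt (fun u : ℝ => T u z) (T s y) (Set.Ici s) s := by
  rw [hasDerivWithinAt_iff_tendsto_slope, Set.Ici_sdiff_left]
  have hphi : Filter.Tendsto (fun u : ℝ => u - s) (nhdsWithin s (Set.Ioi s))
      (nhdsWithin 0 (Set.Ioi 0)) := by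
    rw [tendsto_nhdsWithin_iff]
    constructor
    · have h0 : Filter.Tendsto (fun u : ℝ => u - s) (nhds s) (nhds (s - s)) :=
        (continuous_id.sub continuous_const).tendsto s
      rw [sub_self] at h0
      exact h0.mono_left nhdsWithin_le_nhds
    · filter_upwards [self_mem_nhdsWithin] with u hu
      exact sub_pos.mpr (Set.mem_Ioi.mp hu)
  have h2 : Filter.Tendsto (fun u : ℝ => T s (((u - s : ℝ) : ℂ)⁻¹ • (T (u - s) z - z)))
      (nhdsWithin s (Set.Ioi s)) (nhds (T s y)) := ((T s).continuous.tendsto y).comp (h.comp hphi)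
  refine Filter.Tendsto.congr' ?_ h2
  filter_upwards [self_mem_nhdsWithin] with u hu
  have hus : (0:ℝ) < u - s := sub_pos.mpr hu
  have hTs : T s (T (u - s) z) = T u z := by
    have hm := hT.map_add s (u - s) hs (le_of_lt hus)
    rw [show s + (u - s) = u by ring] at hm
    rw [hm]; rfl
  rw [slope_def_module, ← Complex.ofReal_inv, Complex.coe_smul,
    ContinuousLinearMap.map_smul_of_tower, map_sub, hTs]

lemma T_R1_lip (hT : IsC0Semigroup T) (hA : IsGenerator T A) (hR1 : IsResolventAt A 1 R1)
    {M : ℝ} (hM : ∀ t : ℝ, 0 ≤ t → ‖T t‖ ≤ M)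
    (x : X) {a b : ℝ} (ha : 0 ≤ a) (hab : a ≤ b) :
    ‖T b (R1 x) - T a (R1 x)‖ ≤ M * ‖R1 - 1‖ * ‖x‖ * (b - a) := by
  have hM0 : 0 ≤ M := le_trans (norm_nonneg _) (hM 0 le_rfl)
  have hten := (hA (R1 x) (R1 x - x)).mp (R1_mem_domain hR1 x)
  have hcont : ContinuousOn (fun u : ℝ => T u (R1 x)) (Set.Icc a b) :=
    (hT.strongContinuity (R1 x)).mono (fun u hu => le_trans ha hu.1)
  have hderiv : ∀ u ∈ Set.Ico a b, HasDerivWithinAt (fun u : ℝ => T u (R1 x))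
      ((fun u : ℝ => T u ((R1 - 1) x)) u) (Set.Ici u) u := by
    intro u hu
    have h := hasDerivWithinAt_T hT (le_trans ha hu.1) hten
    simpa [ContinuousLinearMap.sub_apply] using h
  have hbd : ∀ u ∈ Set.Ico a b, ‖T u ((R1 - 1) x)‖ ≤ M * ‖R1 - 1‖ * ‖x‖ := by
    intro u hu
    calc ‖T u ((R1 - 1) x)‖ ≤ ‖T u‖ * ‖(R1 - 1) x‖ := (T u).le_opNorm _
      _ ≤ M * (‖R1 - 1‖ * ‖x‖) :=
        mul_le_mul (hM u (le_trans ha hu.1)) ((R1 - 1).le_opNorm x) (norm_nonneg _) hM0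
      _ = M * ‖R1 - 1‖ * ‖x‖ := (mul_assoc _ _ _).symm
  have := norm_image_sub_le_of_norm_deriv_right_le_segment hcont hderiv hbd b
    (Set.right_mem_Icc.mpr hab)
  linarith

lemma contTR1 (hT : IsC0Semigroup T) (hA : IsGenerator T A) (hR1 : IsResolventAt A 1 R1)
    {M : ℝ} (hM : ∀ t : ℝ, 0 ≤ t → ‖T t‖ ≤ M) :
    ContinuousOn (fun t : ℝ => (T t).comp R1) (Set.Ici 0) := by
  have hM0 : 0 ≤ M := le_trans (norm_nonneg _) (hM 0 le_rfl)
  set C := M * ‖R1 - 1‖ with hC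
  have hC0 : 0 ≤ C := mul_nonneg hM0 (norm_nonneg _)
  have hkey : ∀ a b : ℝ, 0 ≤ a → a ≤ b → ‖(T b).comp R1 - (T a).comp R1‖ ≤ C * (b - a) := by
    intro a b ha hab
    refine ContinuousLinearMap.opNorm_le_bound _ (mul_nonneg hC0 (by linarith)) fun x => ?_
    simp only [ContinuousLinearMap.sub_apply, ContinuousLinearMap.comp_apply]
    calc ‖T b (R1 x) - T a (R1 x)‖ ≤ M * ‖R1 - 1‖ * ‖x‖ * (b - a) :=
        T_R1_lip hT hA hR1 hM x ha hab
      _ = C * (b - a) * ‖x‖ := by rw [hC]; ring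
  refine LipschitzOnWith.continuousOn (K := Real.toNNReal C)
    (LipschitzOnWith.of_dist_le_mul fun s hs t ht => ?_)
  rw [dist_eq_norm, Real.dist_eq, Real.coe_toNNReal C hC0]
  rcases le_total s t with h | h
  · rw [norm_sub_rev, abs_sub_comm, abs_of_nonneg (sub_nonneg.mpr h)]
    exact hkey s t hs h
  · rw [abs_of_nonneg (sub_nonneg.mpr h)]
    exact hkey t s ht h

/-- The clamp function `v ↦ max 0 (min v 1)`. -/
noncomputable def clamp01 (v : ℝ) : ℝ := max 0 (min v 1)

lemma clamp01_continuous : Continuous clamp01 :=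
  continuous_const.max (continuous_id.min continuous_const)

lemma clamp01_nonneg (v : ℝ) : 0 ≤ clamp01 v := le_max_left _ _

lemma clamp01_le_one (v : ℝ) : clamp01 v ≤ 1 :=
  max_le zero_le_one (min_le_right _ _)

lemma clamp01_of_nonpos {v : ℝ} (hv : v ≤ 0) : clamp01 v = 0 := by
  rw [clamp01, min_eq_left (hv.trans zero_le_one), max_eq_left hv]

lemma clamp01_of_one_le {v : ℝ} (hv : 1 ≤ v) : clamp01 v = 1 := by
  rw [clamp01, min_eq_right hv, max_eq_right zero_le_one]

lemma clamp01_of_mem {v : ℝ} (h0 : 0 ≤ v) (h1 : v ≤ 1) : clamp01 v = v := by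
  rw [clamp01, min_eq_left h1, max_eq_right h0]

/-- The piecewise-linear interpolation of partial sums of the Neumann series of `B`. -/
noncomputable def Gaux (B : X →L[ℂ] X) (u : ℝ) : X →L[ℂ] X :=
  ∑ k ∈ Finset.range (⌊u⌋₊ + 1), clamp01 (u - k) • B ^ k

lemma Gaux_eq (B : X →L[ℂ] X) {K : ℕ} {u : ℝ} (h0 : 0 ≤ u) (hu : u < K) :
    Gaux B u = ∑ k ∈ Finset.range K, clamp01 (u - k) • B ^ k := by
  apply Finset.sum_subset
  · exact Finset.range_subset_range.mpr (Nat.succ_le_of_lt ((Nat.floor_lt h0).mpr hu))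
  · intro k _ hk2
    have h2 : ⌊u⌋₊ + 1 ≤ k := by simpa [Finset.mem_range, not_lt] using hk2
    have h3 : u < k :=
      lt_of_lt_of_le (Nat.lt_floor_add_one u) (by exact_mod_cast h2)
    rw [clamp01_of_nonpos (by linarith), zero_smul]

lemma Gaux_continuousOn (B : X →L[ℂ] X) : ContinuousOn (Gaux B) (Set.Ioi 0) := by
  intro u₀ hu₀
  apply ContinuousAt.continuousWithinAt
  have hK : u₀ < ((⌊u₀⌋₊ + 1 : ℕ) : ℝ) := by
    push_cast
    exact Nat.lt_floor_add_one u₀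
  have hopen : IsOpen (Set.Ioi (0:ℝ) ∩ Set.Iio ((⌊u₀⌋₊ + 1 : ℕ) : ℝ)) :=
    isOpen_Ioi.inter isOpen_Iio
  have hFcont : Continuous (fun u : ℝ =>
      ∑ k ∈ Finset.range (⌊u₀⌋₊ + 1), clamp01 (u - k) • B ^ k) :=
    continuous_finset_sum _ fun k _ =>
      ((clamp01_continuous.comp (continuous_id.sub continuous_const)).smul continuous_const)
  apply hFcont.continuousAt.congr
  filter_upwards [hopen.mem_nhds ⟨hu₀, hK⟩] with u hu
  exact (Gaux_eq B (le_of_lt hu.1) hu.2).symm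

lemma Gaux_val (B : X →L[ℂ] X) {u : ℝ} (h0 : 0 ≤ u) :
    Gaux B u = (∑ k ∈ Finset.range ⌊u⌋₊, B ^ k) + (u - ⌊u⌋₊) • B ^ ⌊u⌋₊ := by
  rw [Gaux, Finset.sum_range_succ]
  congr 1
  · apply Finset.sum_congr rfl
    intro k hk
    rw [Finset.mem_range] at hk
    have h1 : (k:ℝ) + 1 ≤ ⌊u⌋₊ := by exact_mod_cast Nat.succ_le_of_lt hk
    have h2 : (⌊u⌋₊:ℝ) ≤ u := Nat.floor_le h0
    rw [clamp01_of_one_le (by linarith), one_smul]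
  · rw [clamp01_of_mem (sub_nonneg.mpr (Nat.floor_le h0))
      (by have := Nat.lt_floor_add_one u; linarith)]

lemma Gaux_norm (B : X →L[ℂ] X) {b : ℝ} (hb : 1 ≤ b) (hB : ‖B‖ ≤ b) {u : ℝ} (h0 : 0 ≤ u) :
    ‖Gaux B u‖ ≤ Real.exp (Real.log (2 * b) * u) := by
  have hb0 : (0:ℝ) < b := lt_of_lt_of_le one_pos hb
  have hpowB : ∀ k : ℕ, ‖B ^ k‖ ≤ b ^ k := by
    intro k
    induction k with
    | zero => simpa [ContinuousLinearMap.one_def] using ContinuousLinearMap.norm_id_le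
    | succ k ih =>
      rw [pow_succ, pow_succ]
      exact le_trans (norm_mul_le _ _)
        (mul_le_mul ih hB (norm_nonneg _) (by positivity))
  have h2 : ((⌊u⌋₊:ℝ) + 1) ≤ 2 ^ ⌊u⌋₊ := by
    exact_mod_cast (Nat.lt_two_pow_self (n := ⌊u⌋₊))
  calc ‖Gaux B u‖ ≤ ∑ k ∈ Finset.range (⌊u⌋₊ + 1), ‖clamp01 (u - k) • B ^ k‖ :=
      norm_sum_le _ _
    _ ≤ ∑ _k ∈ Finset.range (⌊u⌋₊ + 1), b ^ ⌊u⌋₊ := by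
      apply Finset.sum_le_sum
      intro k hk
      calc ‖clamp01 (u - k) • B ^ k‖ ≤ ‖(clamp01 (u - k) : ℝ)‖ * ‖B ^ k‖ := (B ^ k).opNorm_smul_le _
        _ = clamp01 (u - k) * ‖B ^ k‖ := by
            rw [Real.norm_eq_abs, abs_of_nonneg (clamp01_nonneg _)]
        _ ≤ 1 * b ^ k :=
          mul_le_mul (clamp01_le_one _) (hpowB k) (norm_nonneg _) zero_le_one
        _ = b ^ k := one_mul _
        _ ≤ b ^ ⌊u⌋₊ := pow_le_pow_right₀ hb (Nat.lt_succ_iff.mp (Finset.mem_range.mp hk))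
    _ = ((⌊u⌋₊:ℝ) + 1) * b ^ ⌊u⌋₊ := by
      rw [Finset.sum_const, Finset.card_range, nsmul_eq_mul]
      push_cast
      ring
    _ ≤ 2 ^ ⌊u⌋₊ * b ^ ⌊u⌋₊ := by
      have hbn : (0:ℝ) ≤ b ^ ⌊u⌋₊ := by positivity
      nlinarith
    _ = (2*b) ^ ⌊u⌋₊ := (mul_pow 2 b _).symm
    _ ≤ Real.exp (Real.log (2 * b) * u) := by
      have h2b : (1:ℝ) ≤ 2 * b := by linarith
      have e1 : ((2:ℝ)*b) ^ ⌊u⌋₊ = Real.exp (Real.log (2*b) * ⌊u⌋₊) := by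
        rw [mul_comm (Real.log (2*b)), Real.exp_nat_mul, Real.exp_log (by linarith)]
      rw [e1]
      exact Real.exp_le_exp.mpr
        (mul_le_mul_of_nonneg_left (Nat.floor_le h0) (Real.log_nonneg h2b))

lemma one_sub_mul_Gaux (B : X →L[ℂ] X) {u : ℝ} (h0 : 0 ≤ u) :
    (1 : X →L[ℂ] X) - (1 - B) * Gaux B u
      = (1 - (u - ⌊u⌋₊)) • B ^ ⌊u⌋₊ + (u - ⌊u⌋₊) • B ^ (⌊u⌋₊ + 1) := by
  rw [Gaux_val B h0]
  have h1 : ((1:X →L[ℂ] X) - B) * (∑ k ∈ Finset.range ⌊u⌋₊, B ^ k) = 1 - B ^ ⌊u⌋₊ := by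
    have hneg : ((1:X →L[ℂ] X) - B) * (∑ k ∈ Finset.range ⌊u⌋₊, B ^ k)
        = -((B - 1) * ∑ k ∈ Finset.range ⌊u⌋₊, B ^ k) := by
      rw [← neg_mul, neg_sub]
    rw [hneg, mul_geom_sum, neg_sub]
  rw [mul_add, h1, mul_smul_comm, sub_mul, one_mul, ← pow_succ']
  module

end AuxLemmas

/-- **Proposition 4.1.**  Let `T` be a bounded C₀-semigroup with generator `A`, and
let `R1 = R(1, A)` (so that `A R(1,A) = R1 - 1`).  If `‖T(t) A R(1,A)‖ → 0` as
`t → ∞`, then the critical growth bound satisfies `δ(T) < 0`. -/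
theorem critical_growth_bound_negative
    {X : Type*} [NormedAddCommGroup X] [NormedSpace ℂ X] [CompleteSpace X]
    (T : ℝ → X →L[ℂ] X) (A : X →ₗ.[ℂ] X)
    (hT : IsC0Semigroup T) (hTb : IsBoundedSG T) (hA : IsGenerator T A)
    (R1 : X →L[ℂ] X) (hR1 : IsResolventAt A 1 R1)
    (hdecay : Filter.Tendsto (fun t : ℝ => ‖(T t).comp (R1 - 1)‖)
      Filter.atTop (nhds 0)) :
    delta' T < (0 : EReal) := by
  classical
  obtain ⟨M₀, hM₀⟩ := hTb
  set M := max M₀ 1 with hMdef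
  clear_value M
  have hM1 : (1:ℝ) ≤ M := by rw [hMdef]; exact le_max_right _ _
  have hM0 : (0:ℝ) ≤ M := zero_le_one.trans hM1
  have hM : ∀ t : ℝ, 0 ≤ t → ‖T t‖ ≤ M := fun t ht => (hM₀ t ht).trans (by rw [hMdef]; exact le_max_left _ _)
  obtain ⟨t₁, ht₁⟩ := Metric.tendsto_atTop.mp hdecay (1/2) (by norm_num)
  set t₀ : ℝ := max t₁ 1 with ht₀def
  clear_value t₀
  have ht₀pos : (0:ℝ) < t₀ := lt_of_lt_of_le one_pos (by rw [ht₀def]; exact le_max_right _ _)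
  set B' : X →L[ℂ] X := 1 - R1 with hB'
  clear_value B'
  have hR1eq : R1 = 1 - B' := by rw [hB', sub_sub_cancel]
  -- the key smallness of `T t₀ * B'`
  have hsmall : ‖T t₀ * B'‖ ≤ 1/2 := by
    have h1 := ht₁ t₀ (by rw [ht₀def]; exact le_max_left _ _)
    rw [Real.dist_eq, sub_zero, abs_of_nonneg (norm_nonneg _)] at h1
    have h2 : T t₀ * B' = -((T t₀).comp (R1 - 1)) := by
      rw [← ContinuousLinearMap.mul_def (T t₀) (R1 - 1), hB', mul_sub, mul_sub, mul_one]
      abel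
    rw [h2, norm_neg]
    exact le_of_lt h1
  -- commutation
  have hcommB : ∀ t : ℝ, 0 ≤ t → Commute (T t) B' := by
    intro t ht
    have h1 : Commute (T t) R1 := by
      show T t * R1 = R1 * T t
      rw [ContinuousLinearMap.mul_def, ContinuousLinearMap.mul_def]
      exact (R1_comm hT hA hR1 ht).symm
    have h2 := (Commute.one_right (T t)).sub_right h1
    rwa [← hB'] at h2
  -- exponential decay of `T t * B' ^ n`
  have hpow : ∀ n : ℕ, ∀ t : ℝ, (n : ℝ) * t₀ ≤ t → ‖T t * B' ^ n‖ ≤ M * (1/2)^n := by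
    intro n
    induction n with
    | zero =>
      intro t ht
      simp only [Nat.cast_zero, zero_mul] at ht
      simpa using hM t ht
    | succ n ih =>
      intro t ht
      have hc1 : (n:ℝ) * t₀ ≤ t - t₀ := by
        push_cast at ht
        nlinarith
      have h0t : 0 ≤ t - t₀ := le_trans (mul_nonneg (Nat.cast_nonneg n) ht₀pos.le) hc1
      have hsplit : T t = T (t - t₀) * T t₀ := by
        rw [ContinuousLinearMap.mul_def, ← hT.map_add (t - t₀) t₀ h0t ht₀pos.le,
          show t - t₀ + t₀ = t by ring]
      have heq : T t * B' ^ (n+1) = (T (t - t₀) * B' ^ n) * (T t₀ * B') := by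
        have hc := ((hcommB t₀ ht₀pos.le).pow_right n).eq
        rw [hsplit, pow_succ, mul_assoc (T (t - t₀)) (T t₀), ← mul_assoc (T t₀) (B' ^ n) B',
          hc, mul_assoc (B' ^ n) (T t₀) B', ← mul_assoc (T (t - t₀)) (B' ^ n), ← mul_assoc]
      rw [heq]
      calc ‖(T (t - t₀) * B' ^ n) * (T t₀ * B')‖
          ≤ ‖T (t - t₀) * B' ^ n‖ * ‖T t₀ * B'‖ := norm_mul_le _ _
        _ ≤ (M * (1/2)^n) * (1/2) :=
          mul_le_mul (ih (t - t₀) hc1) hsmall (norm_nonneg _) (by positivity)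
        _ = M * (1/2)^(n+1) := by ring
  -- the approximating norm-continuous function
  set S : ℝ → X →L[ℂ] X := fun t => ((T t).comp R1).comp (Gaux B' (t / t₀)) with hSdef
  clear_value S
  have hS_mul : ∀ t : ℝ, S t = T t * (R1 * Gaux B' (t / t₀)) := by
    intro t
    rw [hSdef]
    simp only [ContinuousLinearMap.mul_def]
    rw [ContinuousLinearMap.comp_assoc]
  have hScont : ContinuousOn S (Set.Ioi 0) := by
    rw [hSdef]
    apply ContinuousOn.clm_comp
    · exact (contTR1 hT hA hR1 hM).mono Set.Ioi_subset_Ici_self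
    · apply (Gaux_continuousOn B').comp ((continuous_id.div_const t₀).continuousOn)
      intro t ht
      exact div_pos ht ht₀pos
  set ω : ℝ := Real.log 2 / t₀ with hωdef
  clear_value ω
  have hωpos : 0 < ω := by rw [hωdef]; exact div_pos (Real.log_pos one_lt_two) ht₀pos
  -- the exponential bound on the remainder
  have hTS : ∀ t : ℝ, 0 < t →
      ‖T t - S t‖ ≤ (2*(M*(1+‖B'‖))) * Real.exp (-ω * t) := by
    intro t ht
    have hu0 : 0 < t / t₀ := div_pos ht ht₀pos
    set u : ℝ := t / t₀ with hu
    clear_value u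
    set n : ℕ := ⌊u⌋₊ with hn
    clear_value n
    set θ : ℝ := u - n with hθ
    clear_value θ
    have hθ0 : 0 ≤ θ := by rw [hθ, hn]; exact sub_nonneg.mpr (Nat.floor_le hu0.le)
    have hun1 : u < (n:ℝ) + 1 := by rw [hn]; exact Nat.lt_floor_add_one u
    have hθ1 : θ ≤ 1 := by rw [hθ]; linarith
    have hnu : (n:ℝ) ≤ u := by rw [hn]; exact Nat.floor_le hu0.le
    have hnt : (n:ℝ) * t₀ ≤ t := by
      have h2 : u * t₀ = t := by rw [hu]; exact div_mul_cancel₀ t (ne_of_gt ht₀pos)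
      nlinarith
    have hrem : T t - S t = (1 - θ) • (T t * B' ^ n) + θ • (T t * B' ^ (n+1)) := by
      have e1 : T t - S t = T t * ((1 : X →L[ℂ] X) - R1 * Gaux B' u) := by
        rw [mul_sub, mul_one, hS_mul t, ← hu]
      rw [e1, hR1eq, one_sub_mul_Gaux B' hu0.le, ← hn, ← hθ, mul_add, mul_smul_comm,
        mul_smul_comm]
    have hb1 : ‖T t * B' ^ n‖ ≤ M * (1/2)^n := hpow n t hnt
    have hb2 : ‖T t * B' ^ (n+1)‖ ≤ (M * (1/2)^n) * ‖B'‖ := by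
      rw [show T t * B' ^ (n+1) = (T t * B' ^ n) * B' by rw [pow_succ, mul_assoc]]
      exact le_trans (norm_mul_le _ _) (mul_le_mul_of_nonneg_right hb1 (norm_nonneg _))
    have hhalf : ((1:ℝ)/2)^n ≤ 2 * Real.exp (-ω * t) := by
      have e1 : ((1:ℝ)/2)^n = Real.exp (-((n:ℝ) * Real.log 2)) := by
        rw [Real.exp_neg, Real.exp_nat_mul, Real.exp_log zero_lt_two, one_div, inv_pow]
      have e2 : -ω * t = -(u * Real.log 2) := by
        rw [hωdef, hu]; ring
      rw [e1, e2]
      have hlog2 : 0 < Real.log 2 := Real.log_pos one_lt_two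
      calc Real.exp (-((n:ℝ) * Real.log 2))
          ≤ Real.exp (Real.log 2 - u * Real.log 2) := by
            apply Real.exp_le_exp.mpr
            nlinarith
        _ = 2 * Real.exp (-(u * Real.log 2)) := by
            rw [sub_eq_add_neg, Real.exp_add, Real.exp_log zero_lt_two]
    rw [hrem]
    have hpos : (0:ℝ) ≤ M * (1/2)^n := by positivity
    calc ‖(1-θ) • (T t * B' ^ n) + θ • (T t * B' ^ (n+1))‖
        ≤ ‖(1-θ) • (T t * B' ^ n)‖ + ‖θ • (T t * B' ^ (n+1))‖ := norm_add_le _ _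
      _ ≤ (1-θ) * ‖T t * B' ^ n‖ + θ * ‖T t * B' ^ (n+1)‖ := by
          have k1 : ‖(1-θ) • (T t * B' ^ n)‖ ≤ (1-θ) * ‖T t * B' ^ n‖ := by
            refine le_trans ((T t * B' ^ n).opNorm_smul_le _) (le_of_eq ?_)
            rw [Real.norm_eq_abs, abs_of_nonneg (by linarith : (0:ℝ) ≤ 1 - θ)]
          have k2 : ‖θ • (T t * B' ^ (n+1))‖ ≤ θ * ‖T t * B' ^ (n+1)‖ := by
            refine le_trans ((T t * B' ^ (n+1)).opNorm_smul_le _) (le_of_eq ?_)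
            rw [Real.norm_eq_abs, abs_of_nonneg hθ0]
          linarith
      _ ≤ ‖T t * B' ^ n‖ + ‖T t * B' ^ (n+1)‖ := by
          have g1 : (1-θ) * ‖T t * B' ^ n‖ ≤ ‖T t * B' ^ n‖ :=
            mul_le_of_le_one_left (norm_nonneg _) (by linarith)
          have g2 : θ * ‖T t * B' ^ (n+1)‖ ≤ ‖T t * B' ^ (n+1)‖ :=
            mul_le_of_le_one_left (norm_nonneg _) hθ1
          linarith
      _ ≤ M * (1/2)^n + M * (1/2)^n * ‖B'‖ := by linarith
      _ = (M*(1+‖B'‖)) * (1/2)^n := by ring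
      _ ≤ (M*(1+‖B'‖)) * (2 * Real.exp (-ω * t)) := by
          apply mul_le_mul_of_nonneg_left hhalf
          positivity
      _ = (2*(M*(1+‖B'‖))) * Real.exp (-ω * t) := by ring
  -- exponential boundedness of `S`
  set b : ℝ := max ‖B'‖ 1 with hbdef
  clear_value b
  have hb1 : (1:ℝ) ≤ b := by rw [hbdef]; exact le_max_right _ _
  have hSexp : ∀ t : ℝ, 0 < t →
      ‖S t‖ ≤ (M * ‖R1‖) * Real.exp ((Real.log (2*b)/t₀) * t) := by
    intro t ht
    have hu0 : (0:ℝ) ≤ t / t₀ := (div_pos ht ht₀pos).le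
    have e1 : Real.log (2*b) * (t/t₀) = (Real.log (2*b)/t₀) * t := by
      ring
    rw [hSdef]
    calc ‖((T t).comp R1).comp (Gaux B' (t / t₀))‖ ≤ ‖(T t).comp R1‖ * ‖Gaux B' (t/t₀)‖ :=
        ContinuousLinearMap.opNorm_comp_le _ _
      _ ≤ (M * ‖R1‖) * Real.exp (Real.log (2*b) * (t/t₀)) := by
          apply mul_le_mul _ (Gaux_norm B' hb1 (by rw [hbdef]; exact le_max_left _ _) hu0) (norm_nonneg _)
            (by positivity)
          exact le_trans (ContinuousLinearMap.opNorm_comp_le _ _)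
            (mul_le_mul_of_nonneg_right (hM t ht.le) (norm_nonneg _))
      _ = (M * ‖R1‖) * Real.exp ((Real.log (2*b)/t₀) * t) := by rw [e1]
  -- conclusion
  have hgb : growthBound (fun t : ℝ => T t - S t) ≤ ((-ω : ℝ) : EReal) := by
    apply sInf_le
    refine ⟨-ω, rfl, max (2*(M*(1+‖B'‖))) 1, le_max_right _ _, fun t ht => ?_⟩
    calc ‖T t - S t‖ ≤ (2*(M*(1+‖B'‖))) * Real.exp (-ω * t) := hTS t ht
      _ ≤ max (2*(M*(1+‖B'‖))) 1 * Real.exp (-ω * t) :=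
        mul_le_mul_of_nonneg_right (le_max_left _ _) (Real.exp_pos _).le
  have hd : delta' T ≤ growthBound (fun t : ℝ => T t - S t) := by
    apply sInf_le
    exact ⟨S, hScont, ⟨M * ‖R1‖, by positivity, Real.log (2*b)/t₀, hSexp⟩, rfl⟩
  calc delta' T ≤ ((-ω : ℝ) : EReal) := le_trans hd hgb
    _ < (0 : EReal) := by exact_mod_cast neg_lt_zero.mpr hωpos


end KTpaper
end
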